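/- arXiv:2212.02388 — 7 statements merged into one kernel-verified Lean document; each statement's English description precedes it below -/
import Mathlib

section
/- Let G be a graph, let {B_x : x ∈ V(T)} be a tree-partition of G, let x ∈ V(T), and let v, w ∈ N_G(B_x) be vertices lying in the same connected component of G − B_x. Then T contains an edge xy such that both v and w belong to B_y. -/
/-- An `H`-partition of `G`: a partition of the vertices of `G` into parts indexed by
the vertices of `H` such that the two ends of every edge of `G` lie in the same part
or in parts indexed by adjacent vertices of `H`.  A tree-partition (path-partition,
i.e. layering) is an `H`-partition where `H` is a tree (respectively, a path). -/
def IsHPartition {α β : Type*} (G : SimpleGraph α) (H : SimpleGraph β)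
    (B : β → Set α) : Prop :=
  (∀ v : α, ∃! x : β, v ∈ B x) ∧
  (∀ ⦃v w : α⦄, G.Adj v w → ∀ ⦃x y : β⦄, v ∈ B x → w ∈ B y → x = y ∨ H.Adj x y)

/-- If `{B x : x ∈ V(T)}` is a tree-partition of `G` and `v, w ∈ N_G(B x)` lie in the
same component of `G − B x`, then `T` has an edge `x y` with `v, w ∈ B y`. -/
theorem stmt5 {α ι : Type} (G : SimpleGraph α) (T : SimpleGraph ι)
    (hT : T.IsTree) (B : ι → Set α) (hB : IsHPartition G T B)
    (x : ι) (v w : α)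
    (hv : v ∉ B x) (hvN : ∃ s ∈ B x, G.Adj s v)
    (hw : w ∉ B x) (hwN : ∃ s ∈ B x, G.Adj s w)
    (hcomp : (G.induce {u : α | u ∉ B x}).Reachable ⟨v, hv⟩ ⟨w, hw⟩) :
    ∃ y : ι, T.Adj x y ∧ v ∈ B y ∧ w ∈ B y := by
  classical
  obtain ⟨huniq, hadj⟩ := hB
  let f : α → ι := fun u => (huniq u).choose
  have hfmem : ∀ u, u ∈ B (f u) := fun u => (huniq u).choose_spec.1
  -- indices of vertices outside B x are ≠ x
  have hfne : ∀ u : α, u ∉ B x → f u ≠ x := by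
    intro u hu h
    exact hu (h ▸ hfmem u)
  -- v and w have indices adjacent to x in T
  have hxadj : ∀ u : α, u ∉ B x → (∃ s ∈ B x, G.Adj s u) → T.Adj x (f u) := by
    rintro u hu ⟨s, hs, hsu⟩
    rcases hadj hsu hs (hfmem u) with h | h
    · exact absurd h.symm (hfne u hu)
    · exact h
  have hxv : T.Adj x (f v) := hxadj v hv hvN
  have hxw : T.Adj x (f w) := hxadj w hw hwN
  -- f v and f w are connected in T avoiding x
  have key : ∀ (a b : {u : α // u ∉ B x}),
      (G.induce {u : α | u ∉ B x}).Walk a b →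
      (T.induce {y : ι | y ≠ x}).Reachable ⟨f a.1, hfne a.1 a.2⟩ ⟨f b.1, hfne b.1 b.2⟩ := by
    intro a b p
    induction p with
    | nil => exact SimpleGraph.Reachable.refl _
    | @cons a c b h p ih =>
      have hGac : G.Adj a.1 c.1 := h
      rcases hadj hGac (hfmem a.1) (hfmem c.1) with heq | hTac
      · have : (⟨f a.1, hfne a.1 a.2⟩ : {y : ι // y ≠ x}) = ⟨f c.1, hfne c.1 c.2⟩ :=
          Subtype.ext heq
        rw [this]; exact ih
      · have hadj' : (T.induce {y : ι | y ≠ x}).Adj ⟨f a.1, hfne a.1 a.2⟩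
            ⟨f c.1, hfne c.1 c.2⟩ := hTac
        exact hadj'.reachable.trans ih
  obtain ⟨p⟩ := hcomp
  obtain ⟨q⟩ := key _ _ p
  -- map q into T; all its vertices avoid x
  let q' : T.Walk (f v) (f w) := q.map (SimpleGraph.Embedding.induce {y : ι | y ≠ x}).toHom
  have hq'supp : ∀ z ∈ q'.support, z ≠ x := by
    intro z hz
    rw [show q'.support = _ from SimpleGraph.Walk.support_map _ _] at hz
    obtain ⟨⟨z', hz'⟩, _, rfl⟩ := List.mem_map.mp hz
    exact hz'
  -- form a path from f v to f w in T avoiding x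
  have hbp : q'.bypass.IsPath := q'.bypass_isPath
  have hbsupp : x ∉ q'.bypass.support := fun hx =>
    hq'supp x (q'.support_bypass_subset hx) rfl
  -- two paths from x to f w: via f v, and the single edge
  have hpath1 : (SimpleGraph.Walk.cons hxv q'.bypass).IsPath :=
    (SimpleGraph.Walk.cons_isPath_iff hxv q'.bypass).mpr ⟨hbp, hbsupp⟩
  have hequal := SimpleGraph.isAcyclic_iff_path_unique.mp hT.IsAcyclic
    ⟨SimpleGraph.Walk.cons hxv q'.bypass, hpath1⟩ (SimpleGraph.Path.singleton hxw)
  have hlen : ((⟨SimpleGraph.Walk.cons hxv q'.bypass, hpath1⟩ : T.Path x (f w)) : T.Walk x (f w)).length =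
      ((SimpleGraph.Path.singleton hxw : T.Path x (f w)) : T.Walk x (f w)).length := by
    rw [hequal]
  simp [SimpleGraph.Path.singleton, SimpleGraph.Walk.length_cons] at hlen
  have hfvw : f v = f w := SimpleGraph.Walk.Nil.eq hlen
  exact ⟨f v, hxv, hfmem v, hfvw ▸ hfmem w⟩
end

section
/- Let h ≥ 1, let r be the root of the complete binary tree T_h of height h, and let S ⊆ V(T_h) with 1 ≤ |S| < 2^h. Then there exists a vertex v of T_h such that (i) the depth of v is at most log₂|S| + 1; (ii) v ≠ r and the parent of v belongs to S ∪ {r}; and (iii) T_h − S contains a path from v to a leaf of T_h. -/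
/-- Vertices of the complete binary tree of height `h`: a vertex of depth `i`
is a pair `⟨i, j⟩` where `j < 2 ^ i` is its left-to-right index at depth `i`. -/
abbrev BT (h : ℕ) := Σ i : Fin (h + 1), Fin (2 ^ (i : ℕ))

/-- The root of the complete binary tree. -/
def btRoot (h : ℕ) : BT h := ⟨0, ⟨0, by positivity⟩⟩

/-- `p` is the parent of `v` in the complete binary tree: the children of
`⟨i, j⟩` are `⟨i + 1, 2 * j⟩` (left) and `⟨i + 1, 2 * j + 1⟩` (right). -/
def IsParent {h : ℕ} (p v : BT h) : Prop :=
  (v.1 : ℕ) = (p.1 : ℕ) + 1 ∧ (v.2 : ℕ) / 2 = (p.2 : ℕ)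

/-- The complete binary tree `T_h` of height `h` as a simple graph. -/
def btTree (h : ℕ) : SimpleGraph (BT h) :=
  SimpleGraph.fromRel (fun p v => IsParent p v)

/-- `a` is an ancestor of `v` (this includes `a = v`). -/
def IsAncestor {h : ℕ} (a v : BT h) : Prop :=
  (a.1 : ℕ) ≤ (v.1 : ℕ) ∧ (a.2 : ℕ) = (v.2 : ℕ) / 2 ^ ((v.1 : ℕ) - (a.1 : ℕ))

/-- A set of vertices of `T_h` is unrelated if no element of it is an ancestor of
another element of it. -/
def Unrelated {h : ℕ} (B : Set (BT h)) : Prop :=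
  ∀ a ∈ B, ∀ v ∈ B, a ≠ v → ¬IsAncestor a v

/-- `v` is a leaf of `T_h`, i.e. has depth `h`. -/
def IsLeaf {h : ℕ} (v : BT h) : Prop := (v.1 : ℕ) = h

/-- The graph `G_h`: the complete binary tree `T_h` together with, for each depth
`i ∈ {1, …, h}`, the edges of a path `D_i` through all the vertices of depth `i`
in left-to-right order. -/
def gGraph (h : ℕ) : SimpleGraph (BT h) :=
  SimpleGraph.fromRel (fun a b =>
    IsParent a b ∨ ((a.1 : ℕ) = (b.1 : ℕ) ∧ (a.2 : ℕ) + 1 = (b.2 : ℕ)))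

/-- `T_h − S` contains a path from `v` to a leaf of `T_h`. -/
def ReachesLeafAvoiding {h : ℕ} (S : Set (BT h)) (v : BT h) : Prop :=
  ∃ (hv : v ∈ {u : BT h | u ∉ S}) (l : BT h) (hl : l ∈ {u : BT h | u ∉ S}),
    IsLeaf l ∧ ((btTree h).induce {u : BT h | u ∉ S}).Reachable ⟨v, hv⟩ ⟨l, hl⟩

/-- Auxiliary: the vertex at depth `i` on the root-to-leaf path above leaf index `j`. -/
def btV (h j i : ℕ) (hi : i ≤ h) (hj : j < 2 ^ h) : BT h :=
  ⟨⟨i, by omega⟩, ⟨j / 2 ^ (h - i), by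
    rw [Nat.div_lt_iff_lt_mul (pow_pos two_pos _)]
    calc j < 2 ^ h := hj
      _ = 2 ^ i * 2 ^ (h - i) := by rw [← pow_add]; congr 1; omega⟩⟩

lemma btV_fst (h j i : ℕ) (hi : i ≤ h) (hj : j < 2 ^ h) :
    ((btV h j i hi hj).1 : ℕ) = i := rfl

lemma btV_snd (h j i : ℕ) (hi : i ≤ h) (hj : j < 2 ^ h) :
    ((btV h j i hi hj).2 : ℕ) = j / 2 ^ (h - i) := rfl

lemma BT_ext {h : ℕ} {a b : BT h} (h1 : (a.1 : ℕ) = (b.1 : ℕ))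
    (h2 : (a.2 : ℕ) = (b.2 : ℕ)) : a = b := by
  obtain ⟨⟨i, hi⟩, ⟨x, hx⟩⟩ := a
  obtain ⟨⟨i', hi'⟩, ⟨x', hx'⟩⟩ := b
  simp only [Fin.val_mk] at h1 h2
  subst h1
  subst h2
  rfl

lemma btV_parent (h j i : ℕ) (hi : i + 1 ≤ h) (hj : j < 2 ^ h) :
    IsParent (btV h j i (by omega) hj) (btV h j (i + 1) hi hj) := by
  refine ⟨rfl, ?_⟩
  show (j / 2 ^ (h - (i + 1))) / 2 = j / 2 ^ (h - i)
  rw [Nat.div_div_eq_div_mul, ← pow_succ]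
  congr 2
  omega

lemma btV_adj (h j i : ℕ) (hi : i + 1 ≤ h) (hj : j < 2 ^ h) :
    (btTree h).Adj (btV h j i (by omega) hj) (btV h j (i + 1) hi hj) := by
  rw [btTree, SimpleGraph.fromRel_adj]
  refine ⟨?_, Or.inl (btV_parent h j i hi hj)⟩
  intro e
  have := congrArg (fun x : BT h => (x.1 : ℕ)) e
  simp only [btV_fst] at this
  omega

lemma btReach (h j : ℕ) (hj : j < 2 ^ h) (S : Set (BT h)) (i0 : ℕ)
    (hS : ∀ i, i0 ≤ i → ∀ hi : i ≤ h, btV h j i hi hj ∉ S) (hi0h : i0 ≤ h) :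
    ∀ (m i : ℕ) (hi0 : i0 ≤ i) (him : i + m = h),
      ((btTree h).induce {u : BT h | u ∉ S}).Reachable
        ⟨btV h j i (by omega) hj, hS i hi0 (by omega)⟩
        ⟨btV h j h le_rfl hj, hS h hi0h le_rfl⟩ := by
  intro m
  induction m with
  | zero =>
    intro i hi0 him
    have : i = h := by omega
    subst this
    rfl
  | succ m ih =>
    intro i hi0 him
    have adj : ((btTree h).induce {u : BT h | u ∉ S}).Adj
        ⟨btV h j i (by omega) hj, hS i hi0 (by omega)⟩
        ⟨btV h j (i + 1) (by omega) hj, hS (i + 1) (by omega) (by omega)⟩ :=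
      btV_adj h j i (by omega) hj
    exact adj.reachable.trans (ih (i + 1) (by omega) (by omega))


/-- If `1 ≤ |S| < 2 ^ h`, then `T_h` has a vertex `v` of depth at most `log₂ |S| + 1`,
distinct from the root, whose parent is in `S ∪ {root}`, such that `T_h − S` contains
a path from `v` to a leaf of `T_h`. -/
theorem stmt6 (h : ℕ) (hh : 1 ≤ h) (S : Finset (BT h))
    (hS1 : 1 ≤ S.card) (hS2 : S.card < 2 ^ h) :
    ∃ v : BT h,
      ((v.1 : ℕ) : ℝ) ≤ Real.logb 2 S.card + 1 ∧
      v ≠ btRoot h ∧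
      (∃ p : BT h, IsParent p v ∧ (p ∈ S ∨ p = btRoot h)) ∧
      ReachesLeafAvoiding (S : Set (BT h)) v := by
  classical
  obtain ⟨k, hkdef, hk1, hkh, hkpos⟩ :
      ∃ k : ℕ, k = Nat.log 2 S.card + 1 ∧ S.card < 2 ^ k ∧ k ≤ h ∧ 1 ≤ k := by
    refine ⟨Nat.log 2 S.card + 1, rfl, Nat.lt_pow_succ_log_self one_lt_two _, ?_, by omega⟩
    have := Nat.log_lt_of_lt_pow (b := 2) (by omega : S.card ≠ 0) hS2
    omega
  -- choose a leaf index j avoiding all elements of S of depth ≥ k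
  obtain ⟨j, hj, hgood⟩ : ∃ j : ℕ, j < 2 ^ h ∧
      ∀ s ∈ S, k ≤ (s.1 : ℕ) → (s.2 : ℕ) ≠ j / 2 ^ (h - (s.1 : ℕ)) := by
    set B : Finset (Fin (2 ^ h)) := S.biUnion (fun s =>
      Finset.univ.filter (fun t : Fin (2 ^ h) =>
        k ≤ (s.1 : ℕ) ∧ (s.2 : ℕ) = (t : ℕ) / 2 ^ (h - (s.1 : ℕ)))) with hB
    have hcard : ∀ s ∈ S,
        (Finset.univ.filter (fun t : Fin (2 ^ h) =>
          k ≤ (s.1 : ℕ) ∧ (s.2 : ℕ) = (t : ℕ) / 2 ^ (h - (s.1 : ℕ)))).card ≤ 2 ^ (h - k) := by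
      intro s _
      by_cases hks : k ≤ (s.1 : ℕ)
      · have h1 : (Finset.univ.filter (fun t : Fin (2 ^ h) =>
            k ≤ (s.1 : ℕ) ∧ (s.2 : ℕ) = (t : ℕ) / 2 ^ (h - (s.1 : ℕ)))).card
            ≤ (Finset.range (2 ^ (h - (s.1 : ℕ)))).card := by
          refine Finset.card_le_card_of_injOn
            (fun t => (t : ℕ) % 2 ^ (h - (s.1 : ℕ))) ?_ ?_
          · intro t _
            simp only [Finset.mem_coe, Finset.coe_range, Set.mem_Iio, Finset.mem_range]
            exact Nat.mod_lt _ (pow_pos two_pos _)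
          · intro t1 ht1 t2 ht2 he
            simp only [Finset.coe_filter, Set.mem_setOf_eq] at ht1 ht2
            apply Fin.ext
            have e1 := Nat.div_add_mod (t1 : ℕ) (2 ^ (h - (s.1 : ℕ)))
            have e2 := Nat.div_add_mod (t2 : ℕ) (2 ^ (h - (s.1 : ℕ)))
            rw [← ht1.2.2] at e1
            rw [← ht2.2.2] at e2
            simp only at he
            omega
        simp only [Finset.card_range] at h1
        refine h1.trans (Nat.pow_le_pow_right (by omega) (by omega))
      · have he : (Finset.univ.filter (fun t : Fin (2 ^ h) =>
            k ≤ (s.1 : ℕ) ∧ (s.2 : ℕ) = (t : ℕ) / 2 ^ (h - (s.1 : ℕ)))) = ∅ := by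
          apply Finset.filter_eq_empty_iff.mpr
          intro t _
          tauto
        simp [he]
    have hBcard : B.card < 2 ^ h := by
      calc B.card ≤ ∑ s ∈ S, (Finset.univ.filter (fun t : Fin (2 ^ h) =>
            k ≤ (s.1 : ℕ) ∧ (s.2 : ℕ) = (t : ℕ) / 2 ^ (h - (s.1 : ℕ)))).card :=
          Finset.card_biUnion_le
        _ ≤ ∑ _s ∈ S, 2 ^ (h - k) := Finset.sum_le_sum hcard
        _ = S.card * 2 ^ (h - k) := by rw [Finset.sum_const, smul_eq_mul]
        _ < 2 ^ k * 2 ^ (h - k) :=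
          (Nat.mul_lt_mul_right (pow_pos two_pos _)).mpr hk1
        _ = 2 ^ h := by rw [← pow_add]; congr 1; omega
    obtain ⟨t, ht⟩ : ∃ t : Fin (2 ^ h), t ∉ B := by
      by_contra hc
      push_neg at hc
      have heq : B = Finset.univ := Finset.eq_univ_iff_forall.mpr hc
      rw [heq, Finset.card_univ, Fintype.card_fin] at hBcard
      exact lt_irrefl _ hBcard
    refine ⟨(t : ℕ), t.isLt, ?_⟩
    intro s hs hks he
    apply ht
    rw [hB, Finset.mem_biUnion]
    exact ⟨s, hs, by simp [hks, he]⟩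
  -- maximum depth d of an ancestor of the leaf lying in S ∪ {root}
  obtain ⟨d, hdA, hdub⟩ : ∃ d,
      d ∈ (insert 0 ((S.filter
        (fun s => (s.2 : ℕ) = j / 2 ^ (h - (s.1 : ℕ)))).image (fun s => ((s.1 : ℕ))))) ∧
      ∀ a ∈ (insert 0 ((S.filter
        (fun s => (s.2 : ℕ) = j / 2 ^ (h - (s.1 : ℕ)))).image (fun s => ((s.1 : ℕ))))), a ≤ d := by
    have hAne : (insert 0 ((S.filter
        (fun s => (s.2 : ℕ) = j / 2 ^ (h - (s.1 : ℕ)))).image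
        (fun s => ((s.1 : ℕ))))).Nonempty := ⟨0, Finset.mem_insert_self _ _⟩
    exact ⟨_, Finset.max'_mem _ hAne, fun a ha => Finset.le_max' _ a ha⟩
  have hdub' : ∀ s ∈ S, (s.2 : ℕ) = j / 2 ^ (h - (s.1 : ℕ)) → (s.1 : ℕ) ≤ d := by
    intro s hs he
    exact hdub _ (Finset.mem_insert_of_mem
      (Finset.mem_image_of_mem _ (Finset.mem_filter.mpr ⟨hs, he⟩)))
  have hdk : d < k := by
    rcases Finset.mem_insert.mp hdA with h0 | hmem
    · omega
    · obtain ⟨s, hs, hse⟩ := Finset.mem_image.mp hmem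
      obtain ⟨hsS, hanc⟩ := Finset.mem_filter.mp hs
      by_contra hge
      exact hgood s hsS (by omega) hanc
  have hd1h : d + 1 ≤ h := by omega
  have havoid : ∀ i, d + 1 ≤ i → ∀ hi : i ≤ h, btV h j i hi hj ∉ (S : Set (BT h)) := by
    intro i hdi hi hmem
    simp only [Finset.coe_sort_coe, Finset.mem_coe] at hmem
    by_cases hki : k ≤ i
    · exact hgood _ hmem hki rfl
    · have := hdub' _ hmem rfl
      rw [btV_fst] at this
      omega
  refine ⟨btV h j (d + 1) hd1h hj, ?_, ?_, ?_, ?_⟩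
  · -- depth bound
    rw [btV_fst]
    push_cast
    have h1 : (Nat.log 2 S.card : ℝ) ≤ Real.logb 2 S.card := Real.natLog_le_logb S.card 2
    have h2 : (d : ℝ) ≤ (Nat.log 2 S.card : ℝ) := by
      exact_mod_cast (by omega : d ≤ Nat.log 2 S.card)
    linarith
  · -- not the root
    intro e
    have := congrArg (fun x : BT h => (x.1 : ℕ)) e
    simp only [btV_fst, btRoot, Fin.val_zero] at this
    omega
  · -- parent in S ∪ {root}
    refine ⟨btV h j d (by omega) hj, btV_parent h j d hd1h hj, ?_⟩
    rcases Nat.eq_zero_or_pos d with hd0 | hdpos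
    · right
      subst hd0
      apply BT_ext
      · rfl
      · show j / 2 ^ (h - 0) = ((btRoot h).2 : ℕ)
        show j / 2 ^ (h - 0) = 0
        exact Nat.div_eq_of_lt hj
    · left
      rcases Finset.mem_insert.mp hdA with h0 | hmem
      · omega
      · obtain ⟨s, hs, hse⟩ := Finset.mem_image.mp hmem
        obtain ⟨hsS, hanc⟩ := Finset.mem_filter.mp hs
        have : btV h j d (by omega) hj = s := by
          apply BT_ext
          · rw [btV_fst, hse]
          · rw [btV_snd, hanc, hse]
        rw [this]
        exact hsS
  · -- reaches a leaf
    refine ⟨havoid (d + 1) le_rfl hd1h, btV h j h le_rfl hj,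
      havoid h (by omega) le_rfl, rfl, ?_⟩
    exact btReach h j hj (S : Set (BT h)) (d + 1) havoid hd1h
      (h - (d + 1)) (d + 1) le_rfl (by omega)
end

section
/- Let h ≥ 1, let r be the root of the complete binary tree T_h of height h, and let S ⊆ V(T_h) with 1 ≤ |S| < 2^{h−1}. Then there exist two unrelated vertices v₁ and v₂ of T_h such that, for each i ∈ {1,2}: (i) the depth of v_i is at most log₂|S| + 2; (ii) v_i ≠ r and the parent of v_i belongs to S ∪ {r}; and (iii) T_h − S contains a path from v_i to a leaf of T_h. -/
/-- ancestor at depth `e` of leaf index `j` (total function). -/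
def anc (h j e : ℕ) : BT h :=
  ⟨⟨min e h, by omega⟩, ⟨j / 2 ^ (h - e) % 2 ^ min e h, Nat.mod_lt _ (by positivity)⟩⟩

lemma anc_fst (h j e : ℕ) (he : e ≤ h) : ((anc h j e).1 : ℕ) = e := by
  simp [anc, min_eq_left he]

lemma anc_snd (h j e : ℕ) (he : e ≤ h) (hj : j < 2 ^ h) :
    ((anc h j e).2 : ℕ) = j / 2 ^ (h - e) := by
  have hb : j / 2 ^ (h - e) < 2 ^ e := by
    rw [Nat.div_lt_iff_lt_mul (by positivity)]
    calc j < 2 ^ h := hj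
    _ = 2 ^ e * 2 ^ (h - e) := by rw [← pow_add]; congr 1; omega
  simp [anc, min_eq_left he, Nat.mod_eq_of_lt hb]

lemma bt_ext {h : ℕ} {v w : BT h} (h1 : (v.1 : ℕ) = (w.1 : ℕ))
    (h2 : (v.2 : ℕ) = (w.2 : ℕ)) : v = w := by
  obtain ⟨⟨i, hi⟩, ⟨a, ha⟩⟩ := v
  obtain ⟨⟨i', hi'⟩, ⟨a', ha'⟩⟩ := w
  simp only [Fin.val_mk] at h1 h2
  subst h1
  subst h2
  rfl

lemma anc_zero (h j : ℕ) (hj : j < 2 ^ h) : anc h j 0 = btRoot h := by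
  have h1 : j / 2 ^ (h - 0) = 0 := Nat.div_eq_of_lt (by simpa using hj)
  apply bt_ext
  · simp [anc, btRoot]
  · simp [anc, btRoot, Nat.mod_one]

lemma anc_ne (h j e e' : ℕ) (he : e ≤ h) (he' : e' ≤ h) (hne : e ≠ e') :
    anc h j e ≠ anc h j e' := by
  intro hEq
  have := congrArg (fun v : BT h => (v.1 : ℕ)) hEq
  simp only [anc_fst _ _ _ he, anc_fst _ _ _ he'] at this
  exact hne this

lemma anc_parent (h j t : ℕ) (ht1 : 1 ≤ t) (ht : t ≤ h) (hj : j < 2 ^ h) :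
    IsParent (anc h j (t - 1)) (anc h j t) := by
  constructor
  · rw [anc_fst _ _ _ ht, anc_fst _ _ _ (by omega)]; omega
  · rw [anc_snd _ _ _ ht hj, anc_snd _ _ _ (by omega) hj]
    rw [Nat.div_div_eq_div_mul]
    congr 1
    rw [← pow_succ]
    congr 1
    omega

lemma reach_lemma (h j : ℕ) (hj : j < 2 ^ h) (S : Set (BT h)) :
    ∀ k, k ≤ h → (∀ e, h - k ≤ e → e ≤ h → anc h j e ∉ S) →
    ∃ (hv : anc h j (h - k) ∈ {u : BT h | u ∉ S}) (hl : anc h j h ∈ {u : BT h | u ∉ S}),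
      ((btTree h).induce {u : BT h | u ∉ S}).Reachable ⟨anc h j (h - k), hv⟩ ⟨anc h j h, hl⟩ := by
  intro k
  induction k with
  | zero =>
    intro _ hall
    have hv : anc h j (h - 0) ∈ {u : BT h | u ∉ S} := hall h (by omega) le_rfl
    have hl : anc h j h ∈ {u : BT h | u ∉ S} := hall h (by omega) le_rfl
    refine ⟨by simpa using hv, hl, ?_⟩
    have : anc h j (h - 0) = anc h j h := by norm_num
    exact SimpleGraph.Reachable.refl _ |>.mono le_rfl |>.trans (by rw [show ((⟨anc h j (h-0), by simpa using hv⟩ : {u : BT h | u ∉ S}) : {u : BT h | u ∉ S}) = ⟨anc h j h, hl⟩ from Subtype.ext this])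
  | succ k ih =>
    intro hk hall
    have hall' : ∀ e, h - k ≤ e → e ≤ h → anc h j e ∉ S := fun e he1 he2 =>
      hall e (by omega) he2
    obtain ⟨hv, hl, hreach⟩ := ih (by omega) hall'
    have hv' : anc h j (h - (k + 1)) ∈ {u : BT h | u ∉ S} :=
      hall (h - (k+1)) le_rfl (by omega)
    refine ⟨hv', hl, ?_⟩
    have hadj : ((btTree h).induce {u : BT h | u ∉ S}).Adj
        ⟨anc h j (h - (k + 1)), hv'⟩ ⟨anc h j (h - k), hv⟩ := by
      show (btTree h).Adj _ _
      rw [btTree, SimpleGraph.fromRel_adj]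
      have hp : IsParent (anc h j (h - (k + 1))) (anc h j (h - k)) := by
        have := anc_parent h j (h - k) (by omega) (by omega) hj
        rwa [show h - k - 1 = h - (k + 1) by omega] at this
      exact ⟨anc_ne h j _ _ (by omega) (by omega) (by omega), Or.inl hp⟩
    exact hadj.reachable.trans hreach

lemma exists_min (h j : ℕ) (S : Finset (BT h)) :
    ∀ d, 1 ≤ d → d ≤ h → (∀ e, d ≤ e → e ≤ h → anc h j e ∉ S) →
    ∃ t, 1 ≤ t ∧ t ≤ d ∧ (∀ e, t ≤ e → e ≤ h → anc h j e ∉ S) ∧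
      (t = 1 ∨ anc h j (t - 1) ∈ S) := by
  classical
  intro d
  induction d with
  | zero => omega
  | succ d ih =>
    intro _ hdh hgood
    by_cases hd0 : d = 0
    · subst hd0
      exact ⟨1, le_rfl, le_rfl, hgood, Or.inl rfl⟩
    · by_cases hc : anc h j d ∈ S
      · exact ⟨d + 1, by omega, le_rfl, hgood, Or.inr (show anc h j (d + 1 - 1) ∈ S by rw [Nat.add_sub_cancel]; exact hc)⟩
      · have hgood' : ∀ e, d ≤ e → e ≤ h → anc h j e ∉ S := by
          intro e he1 he2
          rcases eq_or_lt_of_le he1 with heq | hlt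
          · rwa [← heq]
          · exact hgood e (by omega) he2
        obtain ⟨t, ht1, ht2, ht3, ht4⟩ := ih (by omega) (by omega) hgood'
        exact ⟨t, ht1, by omega, ht3, ht4⟩

lemma side_lemma (h : ℕ) (S : Finset (BT h)) (hh : 2 ≤ h) (hS1 : 1 ≤ S.card)
    (hS2 : S.card < 2 ^ (h - 1)) (b : ℕ) (hb : b < 2) :
    ∃ v : BT h, (v.1 : ℕ) ≤ Nat.log 2 S.card + 2 ∧ 1 ≤ (v.1 : ℕ) ∧
      (v.2 : ℕ) / 2 ^ ((v.1 : ℕ) - 1) = b ∧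
      v ≠ btRoot h ∧ (∃ p : BT h, IsParent p v ∧ (p ∈ S ∨ p = btRoot h)) ∧
      ReachesLeafAvoiding (S : Set (BT h)) v := by
  classical
  set d : ℕ := Nat.log 2 S.card + 2 with hd_def
  have hlog : Nat.log 2 S.card < h - 1 := Nat.log_lt_of_lt_pow (by omega) hS2
  have hd : d ≤ h := by omega
  have hcard : S.card * 2 ^ (h - d) < 2 ^ (h - 1) := by
    have h1 : S.card < 2 ^ (d - 1) := by
      rw [show d - 1 = Nat.log 2 S.card + 1 by omega]
      exact Nat.lt_pow_succ_log_self (by norm_num) _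
    calc S.card * 2 ^ (h - d) < 2 ^ (d - 1) * 2 ^ (h - d) :=
          Nat.mul_lt_mul_of_lt_of_le h1 le_rfl (by positivity)
      _ = 2 ^ (h - 1) := by rw [← pow_add]; congr 1; omega
  set J : ℕ := b * 2 ^ (h - 1) with hJ_def
  have hpow : 2 ^ (h - 1) * 2 = 2 ^ h := by rw [← pow_succ]; congr 1; omega
  have hJm : ∀ m, m < 2 ^ (h - 1) → J + m < 2 ^ h := by
    intro m hm
    have hble : b ≤ 1 := by omega
    have : J ≤ 2 ^ (h - 1) := by
      calc J = b * 2 ^ (h - 1) := rfl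
        _ ≤ 1 * 2 ^ (h - 1) := Nat.mul_le_mul_right _ hble
        _ = 2 ^ (h - 1) := one_mul _
    omega
  have key : ∃ m, m < 2 ^ (h - 1) ∧ ∀ e, d ≤ e → e ≤ h → anc h (J + m) e ∉ S := by
    by_contra hcon
    push_neg at hcon
    choose! e he1 he2 hs using hcon
    set f : ℕ → BT h × ℕ := fun m => (anc h (J + m) (e m), (J + m) % 2 ^ (h - e m)) with hf
    have hmaps : ∀ m ∈ Finset.range (2 ^ (h - 1)), f m ∈ S ×ˢ Finset.range (2 ^ (h - d)) := by
      intro m hm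
      rw [Finset.mem_range] at hm
      rw [Finset.mem_product]
      refine ⟨hs m hm, ?_⟩
      rw [Finset.mem_range]
      calc (J + m) % 2 ^ (h - e m) < 2 ^ (h - e m) := Nat.mod_lt _ (by positivity)
        _ ≤ 2 ^ (h - d) := Nat.pow_le_pow_right (by norm_num) (by have := he1 m hm; omega)
    have hinj : Set.InjOn f (Finset.range (2 ^ (h - 1))) := by
      intro m hm m' hm' hfe
      rw [Finset.coe_range, Set.mem_Iio] at hm hm'
      have h1 : anc h (J + m) (e m) = anc h (J + m') (e m') := congrArg Prod.fst hfe
      have hee : e m = e m' := by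
        have h3 : ((anc h (J + m) (e m)).1 : ℕ) = ((anc h (J + m') (e m')).1 : ℕ) := by
          rw [h1]
        rwa [anc_fst _ _ _ (he2 m hm), anc_fst _ _ _ (he2 m' hm')] at h3
      have hq : (J + m) / 2 ^ (h - e m) = (J + m') / 2 ^ (h - e m) := by
        have h3 : ((anc h (J + m) (e m)).2 : ℕ) = ((anc h (J + m') (e m')).2 : ℕ) := by
          rw [h1]
        rwa [anc_snd _ _ _ (he2 m hm) (hJm m hm), anc_snd _ _ _ (he2 m' hm') (hJm m' hm'),
          ← hee] at h3
      have h2 : (J + m) % 2 ^ (h - e m) = (J + m') % 2 ^ (h - e m) := by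
        have := congrArg Prod.snd hfe
        simp only [hf] at this
        rwa [← hee] at this
      have e1 := Nat.div_add_mod (J + m) (2 ^ (h - e m))
      have e2 := Nat.div_add_mod (J + m') (2 ^ (h - e m))
      rw [hq, h2] at e1
      omega
    have hle := Finset.card_le_card_of_injOn f hmaps hinj
    rw [Finset.card_range, Finset.card_product, Finset.card_range] at hle
    omega
  obtain ⟨m, hm, hgood⟩ := key
  set j : ℕ := J + m with hj_def
  have hj : j < 2 ^ h := hJm m hm
  obtain ⟨t, ht1, htd, hall, hpar⟩ := exists_min h j S d (by omega) hd hgood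
  have hth : t ≤ h := le_trans htd hd
  refine ⟨anc h j t, ?_, ?_, ?_, ?_, ?_, ?_⟩
  · rw [anc_fst _ _ _ hth]; exact htd
  · rw [anc_fst _ _ _ hth]; exact ht1
  · rw [anc_snd _ _ _ hth hj, anc_fst _ _ _ hth, Nat.div_div_eq_div_mul, ← pow_add,
      show h - t + (t - 1) = h - 1 by omega, hj_def, hJ_def, add_comm (b * 2 ^ (h - 1)) m,
      Nat.add_mul_div_right _ _ (by positivity : (0:ℕ) < 2 ^ (h - 1)),
      Nat.div_eq_of_lt hm, zero_add]
  · rw [← anc_zero h j hj]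
    exact anc_ne h j t 0 hth (by omega) (by omega)
  · refine ⟨anc h j (t - 1), anc_parent h j t ht1 hth hj, ?_⟩
    rcases hpar with h1 | h2
    · right; rw [h1]; exact anc_zero h j hj
    · left; exact h2
  · have hall' : ∀ e, h - (h - t) ≤ e → e ≤ h → anc h j e ∉ (S : Set (BT h)) := by
      intro e he1 he2
      rw [Finset.mem_coe]
      exact hall e (by omega) he2
    obtain ⟨hv, hl, hreach⟩ := reach_lemma h j hj (S : Set (BT h)) (h - t) (by omega) hall'
    have hres : ReachesLeafAvoiding (S : Set (BT h)) (anc h j (h - (h - t))) :=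
      ⟨hv, anc h j h, hl, anc_fst _ _ _ le_rfl, hreach⟩
    rwa [show h - (h - t) = t by omega] at hres

lemma unrel_of_sides {h : ℕ} {v w : BT h} (hv1 : 1 ≤ (v.1 : ℕ)) (hw1 : 1 ≤ (w.1 : ℕ))
    (hvb : (v.2 : ℕ) / 2 ^ ((v.1 : ℕ) - 1) = 0) (hwb : (w.2 : ℕ) / 2 ^ ((w.1 : ℕ) - 1) = 1) :
    v ≠ w ∧ ¬IsAncestor v w ∧ ¬IsAncestor w v := by
  refine ⟨?_, ?_, ?_⟩
  · intro hEq; rw [hEq, hwb] at hvb; exact one_ne_zero hvb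
  · rintro ⟨hle, heq⟩
    rw [heq, Nat.div_div_eq_div_mul, ← pow_add,
      show (w.1 : ℕ) - (v.1 : ℕ) + ((v.1 : ℕ) - 1) = (w.1 : ℕ) - 1 by omega, hwb] at hvb
    exact one_ne_zero hvb
  · rintro ⟨hle, heq⟩
    rw [heq, Nat.div_div_eq_div_mul, ← pow_add,
      show (v.1 : ℕ) - (w.1 : ℕ) + ((w.1 : ℕ) - 1) = (v.1 : ℕ) - 1 by omega, hvb] at hwb
    exact zero_ne_one hwb

/-- If `1 ≤ |S| < 2 ^ (h - 1)`, then `T_h` has two unrelated vertices `v₁, v₂`, each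
of depth at most `log₂ |S| + 2`, distinct from the root, with parent in `S ∪ {root}`,
and joined to a leaf of `T_h` by a path of `T_h − S`. -/
theorem stmt7 (h : ℕ) (hh : 1 ≤ h) (S : Finset (BT h))
    (hS1 : 1 ≤ S.card) (hS2 : S.card < 2 ^ (h - 1)) :
    ∃ v₁ v₂ : BT h, v₁ ≠ v₂ ∧ ¬IsAncestor v₁ v₂ ∧ ¬IsAncestor v₂ v₁ ∧
      (((v₁.1 : ℕ) : ℝ) ≤ Real.logb 2 S.card + 2 ∧
        v₁ ≠ btRoot h ∧
        (∃ p : BT h, IsParent p v₁ ∧ (p ∈ S ∨ p = btRoot h)) ∧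
        ReachesLeafAvoiding (S : Set (BT h)) v₁) ∧
      (((v₂.1 : ℕ) : ℝ) ≤ Real.logb 2 S.card + 2 ∧
        v₂ ≠ btRoot h ∧
        (∃ p : BT h, IsParent p v₂ ∧ (p ∈ S ∨ p = btRoot h)) ∧
        ReachesLeafAvoiding (S : Set (BT h)) v₂) := by
  have hh2 : 2 ≤ h := by
    rcases Nat.lt_or_ge h 2 with h2 | h2
    · interval_cases h <;> simp_all
    · exact h2
  obtain ⟨v₁, hd1, h11, hb1, hr1, hp1, hq1⟩ := side_lemma h S hh2 hS1 hS2 0 (by norm_num)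
  obtain ⟨v₂, hd2, h12, hb2, hr2, hp2, hq2⟩ := side_lemma h S hh2 hS1 hS2 1 (by norm_num)
  obtain ⟨hne, ha1, ha2⟩ := unrel_of_sides h11 h12 hb1 hb2
  have hdepth : ∀ t : ℕ, t ≤ Nat.log 2 S.card + 2 → ((t : ℕ) : ℝ) ≤ Real.logb 2 S.card + 2 := by
    intro t ht
    calc ((t : ℕ) : ℝ) ≤ ((Nat.log 2 S.card + 2 : ℕ) : ℝ) := by exact_mod_cast ht
      _ = (Nat.log 2 S.card : ℝ) + 2 := by push_cast; ring
      _ ≤ Real.logb 2 S.card + 2 := by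
          have := Real.natLog_le_logb S.card 2
          push_cast at this
          linarith
  exact ⟨v₁, v₂, hne, ha1, ha2, ⟨hdepth _ hd1, hr1, hp1, hq1⟩, ⟨hdepth _ hd2, hr2, hp2, hq2⟩⟩
end

section
/- Let x, y, p ≥ 1 be integers, let G be a graph obtained from the x × y grid G_{x×y} by subdividing some of its horizontal edges (each horizontal edge subdivided zero or more times), and let S ⊆ V(G) \ V(G_{x×y}) be a set of subdivision vertices with |S| < p·y. Then some connected component of G − S contains at least x/p consecutive columns of G_{x×y}. -/
/-- A graph obtained from the `x × y` grid by subdividing each horizontal edge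
`e` (the edge joining `(i, j)` and `(i + 1, j)`, indexed by
`e = (i, j) : Fin (x - 1) × Fin y`) into a path through `n e` new subdivision
vertices.  Vertical edges (between `(i, j)` and `(i, j + 1)`) are kept as they are. -/
def gridSubdiv (x y : ℕ) (n : Fin (x - 1) × Fin y → ℕ) :
    SimpleGraph ((Fin x × Fin y) ⊕ (Σ e : Fin (x - 1) × Fin y, Fin (n e))) :=
  SimpleGraph.fromRel (fun a b =>
    match a, b with
    | Sum.inl u, Sum.inl v =>
        -- a vertical edge of the grid
        (u.1 = v.1 ∧ (u.2 : ℕ) + 1 = (v.2 : ℕ)) ∨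
        -- a horizontal edge of the grid that was not subdivided
        (∃ e : Fin (x - 1) × Fin y, n e = 0 ∧ (u.1 : ℕ) = (e.1 : ℕ) ∧
          (v.1 : ℕ) = (e.1 : ℕ) + 1 ∧ u.2 = e.2 ∧ v.2 = e.2)
    | Sum.inl u, Sum.inr w =>
        -- a grid vertex joined to the first or the last subdivision vertex of a
        -- subdivided horizontal edge
        ((u.1 : ℕ) = (w.1.1 : ℕ) ∧ u.2 = w.1.2 ∧ (w.2 : ℕ) = 0) ∨
        ((u.1 : ℕ) = (w.1.1 : ℕ) + 1 ∧ u.2 = w.1.2 ∧ (w.2 : ℕ) + 1 = n w.1)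
    | Sum.inr _, Sum.inl _ => False
    | Sum.inr w, Sum.inr w' =>
        -- consecutive subdivision vertices on the same horizontal edge
        w.1 = w'.1 ∧ (w.2 : ℕ) + 1 = (w'.2 : ℕ))


open Finset in
theorem interval_lemma (x p : ℕ) (hx : 1 ≤ x) (hp : 1 ≤ p) (B : Finset ℕ) (hB : B.card < p) :
    ∃ a len : ℕ, a + len ≤ x ∧ x ≤ len * p ∧ ∀ i, a ≤ i → i + 1 < a + len → i ∉ B := by
  classical
  set f : ℕ → ℕ := fun c => (B.filter (· < c)).card with hf
  have hmono : Monotone f := by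
    intro c d hcd
    apply Finset.card_le_card
    intro t ht
    rw [Finset.mem_filter] at *
    exact ⟨ht.1, lt_of_lt_of_le ht.2 hcd⟩
  have hflt : ∀ c, f c < p := fun c =>
    lt_of_le_of_lt (Finset.card_le_card (Finset.filter_subset _ _)) hB
  have hsum : ∑ v ∈ range p, ((range x).filter (fun c => f c = v)).card = x := by
    rw [← Finset.card_eq_sum_card_fiberwise (fun c _ => Finset.mem_range.2 (hflt c))]
    simp
  have hfiber : ∃ v, x ≤ ((range x).filter (fun c => f c = v)).card * p := by
    by_contra h
    push_neg at h
    have hle : ∀ v, ((range x).filter (fun c => f c = v)).card ≤ (x - 1) / p := by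
      intro v
      have := h v
      rw [Nat.le_div_iff_mul_le hp]
      omega
    have : ∑ v ∈ range p, ((range x).filter (fun c => f c = v)).card ≤ p * ((x - 1) / p) := by
      calc _ ≤ ∑ _v ∈ range p, (x - 1) / p := Finset.sum_le_sum (fun v _ => hle v)
        _ = p * ((x - 1) / p) := by simp [mul_comm]
    have h2 : p * ((x - 1) / p) ≤ x - 1 := Nat.mul_div_le _ _
    omega
  obtain ⟨v, hv⟩ := hfiber
  set fib := (range x).filter (fun c => f c = v) with hfib
  have hne : fib.Nonempty := by
    rw [← Finset.card_pos]; nlinarith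
  set a := fib.min' hne with ha
  set b := fib.max' hne with hb'
  have hafib : a < x ∧ f a = v := by
    have := Finset.mem_filter.mp (fib.min'_mem hne)
    exact ⟨Finset.mem_range.mp this.1, this.2⟩
  have hbfib : b < x ∧ f b = v := by
    have := Finset.mem_filter.mp (fib.max'_mem hne)
    exact ⟨Finset.mem_range.mp this.1, this.2⟩
  have hmemfib : ∀ d, d < x → f d = v → d ∈ fib := by
    intro d h1 h2
    exact Finset.mem_filter.mpr ⟨Finset.mem_range.mpr h1, h2⟩
  have hconv : ∀ d, a ≤ d → d ≤ b → d ∈ fib := by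
    intro d had hdb
    have h1 := hmono had
    have h2 := hmono hdb
    have ha' := hafib.2; have hb' := hbfib.2
    exact hmemfib d (by omega) (by omega)
  have hfibeq : fib = Finset.Icc a b := by
    ext d
    simp only [Finset.mem_Icc]
    constructor
    · intro hd; exact ⟨fib.min'_le d hd, fib.le_max' d hd⟩
    · intro ⟨h1, h2⟩; exact hconv d h1 h2
  have hab : a ≤ b := fib.min'_le b (hmemfib b hbfib.1 hbfib.2)
  have hbx : b < x := hbfib.1
  have hcard : fib.card = b + 1 - a := by rw [hfibeq, Nat.card_Icc]
  refine ⟨a, fib.card, by omega, hv, ?_⟩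
  intro i hai hib hiB
  have h1 : f i = v := by
    exact (Finset.mem_filter.mp (hconv i hai (by omega))).2
  have h2 : f (i+1) = v := by
    exact (Finset.mem_filter.mp (hconv (i+1) (by omega) (by omega))).2
  have hlt : f i < f (i + 1) := by
    apply Finset.card_lt_card
    constructor
    · intro t ht
      rw [Finset.mem_filter] at *
      exact ⟨ht.1, by omega⟩
    · intro hsub
      have : i ∈ B.filter (· < i) := hsub (by rw [Finset.mem_filter]; exact ⟨hiB, by omega⟩)
      rw [Finset.mem_filter] at this
      omega
  omega

section Aux

variable (x y : ℕ) (n : Fin (x - 1) × Fin y → ℕ)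
  (S : Finset (Σ e : Fin (x - 1) × Fin y, Fin (n e)))

/-- the vertex set after deleting `S` -/
def sdSet : Set ((Fin x × Fin y) ⊕ (Σ e : Fin (x - 1) × Fin y, Fin (n e))) :=
  {z | ∀ s ∈ S, z ≠ Sum.inr s}

lemma inl_mem_sdSet (u : Fin x × Fin y) : Sum.inl u ∈ sdSet x y n S :=
  fun _ _ h => Sum.inl_ne_inr h

/-- reachability of grid vertices in the graph minus `S` -/
def sdReach (u v : Fin x × Fin y) : Prop :=
  ((gridSubdiv x y n).induce (sdSet x y n S)).Reachable
    ⟨Sum.inl u, inl_mem_sdSet x y n S u⟩ ⟨Sum.inl v, inl_mem_sdSet x y n S v⟩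

variable {x y n S}

lemma sdReach_refl (u) : sdReach x y n S u u := SimpleGraph.Reachable.refl _
lemma sdReach_symm {u v} (h : sdReach x y n S u v) : sdReach x y n S v u := h.symm
lemma sdReach_trans {u v w} (h : sdReach x y n S u v) (h' : sdReach x y n S v w) :
    sdReach x y n S u w := h.trans h'

lemma sdReach_vert (i : Fin x) (j j' : Fin y) (h : (j : ℕ) + 1 = (j' : ℕ)) :
    sdReach x y n S (i, j) (i, j') := by
  apply SimpleGraph.Adj.reachable
  show (gridSubdiv x y n).Adj (Sum.inl (i, j)) (Sum.inl (i, j'))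
  rw [gridSubdiv, SimpleGraph.fromRel_adj]
  constructor
  · simp only [ne_eq, Sum.inl.injEq, Prod.mk.injEq]
    rintro ⟨-, rfl⟩; omega
  · exact Or.inl (Or.inl ⟨rfl, h⟩)

lemma sdReach_col (i : Fin x) (j j' : Fin y) : sdReach x y n S (i, j) (i, j') := by
  have key : ∀ m (hm : m < y), sdReach x y n S (i, ⟨0, Nat.pos_of_ne_zero (by omega)⟩) (i, ⟨m, hm⟩) := by
    intro m
    induction m with
    | zero => intro hm; exact sdReach_refl _
    | succ t ih =>
      intro hm
      exact sdReach_trans (ih (by omega)) (sdReach_vert i ⟨t, by omega⟩ ⟨t+1, hm⟩ rfl)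
  have h1 := key j j.isLt
  have h2 := key j' j'.isLt
  simp only [Fin.eta] at h1 h2
  exact sdReach_trans (sdReach_symm h1) h2

lemma sdReach_cross (i : ℕ) (hi : i < x - 1) (h1 : i < x) (h2 : i + 1 < x) (j : Fin y)
    (hfree : ∀ k : Fin (n (⟨i, hi⟩, j)),
      (⟨(⟨i, hi⟩, j), k⟩ : Σ e : Fin (x - 1) × Fin y, Fin (n e)) ∉ S) :
    sdReach x y n S (⟨i, h1⟩, j) (⟨i + 1, h2⟩, j) := by
  set e : Fin (x - 1) × Fin y := (⟨i, hi⟩, j) with he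
  have hmemk : ∀ k : Fin (n e), Sum.inr ⟨e, k⟩ ∈ sdSet x y n S := by
    intro k s hs heq
    exact hfree k ((Sum.inr.inj heq) ▸ hs)
  by_cases hn : n e = 0
  · apply SimpleGraph.Adj.reachable
    show (gridSubdiv x y n).Adj (Sum.inl (⟨i, h1⟩, j)) (Sum.inl (⟨i+1, h2⟩, j))
    rw [gridSubdiv, SimpleGraph.fromRel_adj]
    constructor
    · simp only [ne_eq, Sum.inl.injEq, Prod.mk.injEq, Fin.mk.injEq]
      rintro ⟨h, -⟩; omega
    · exact Or.inl (Or.inr ⟨e, hn, rfl, rfl, rfl, rfl⟩)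
  · have hpos : 0 < n e := Nat.pos_of_ne_zero hn
    have aux : ∀ t (ht : t < n e),
        ((gridSubdiv x y n).induce (sdSet x y n S)).Reachable
          ⟨Sum.inl (⟨i, h1⟩, j), inl_mem_sdSet x y n S _⟩
          ⟨Sum.inr ⟨e, ⟨t, ht⟩⟩, hmemk _⟩ := by
      intro t
      induction t with
      | zero =>
        intro ht
        apply SimpleGraph.Adj.reachable
        show (gridSubdiv x y n).Adj (Sum.inl (⟨i, h1⟩, j)) (Sum.inr ⟨e, ⟨0, ht⟩⟩)
        rw [gridSubdiv, SimpleGraph.fromRel_adj]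
        exact ⟨fun h => Sum.inl_ne_inr h, Or.inl (Or.inl ⟨rfl, rfl, rfl⟩)⟩
      | succ t ih =>
        intro ht
        refine (ih (by omega)).trans (SimpleGraph.Adj.reachable ?_)
        show (gridSubdiv x y n).Adj (Sum.inr ⟨e, ⟨t, by omega⟩⟩) (Sum.inr ⟨e, ⟨t+1, ht⟩⟩)
        rw [gridSubdiv, SimpleGraph.fromRel_adj]
        constructor
        · simp only [ne_eq, Sum.inr.injEq, Sigma.mk.inj_iff, heq_eq_eq, Fin.mk.injEq]
          rintro ⟨-, h⟩; omega
        · exact Or.inl ⟨rfl, rfl⟩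
    refine (aux (n e - 1) (by omega)).trans (SimpleGraph.Adj.reachable ?_)
    show (gridSubdiv x y n).Adj (Sum.inr ⟨e, ⟨n e - 1, by omega⟩⟩) (Sum.inl (⟨i+1, h2⟩, j))
    rw [gridSubdiv, SimpleGraph.fromRel_adj]
    refine ⟨fun h => Sum.inl_ne_inr h.symm, Or.inr (Or.inr ⟨rfl, rfl, by simp; omega⟩)⟩

end Aux


section
variable (x y : ℕ) (n : Fin (x - 1) × Fin y → ℕ)
  (S : Finset (Σ e : Fin (x - 1) × Fin y, Fin (n e)))

/-- Between columns `i` and `i+1`, every horizontal edge is broken by `S`. -/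
def CutCol (i : ℕ) : Prop :=
  ∀ j : Fin y, ∃ h : i < x - 1, ∃ k : Fin (n (⟨i, h⟩, j)),
    (⟨(⟨i, h⟩, j), k⟩ : Σ e : Fin (x - 1) × Fin y, Fin (n e)) ∈ S

variable {x y n S}

open Classical in
lemma cut_card (hy : 1 ≤ y) :
    ((Finset.range (x - 1)).filter (fun i => CutCol x y n S i)).card * y ≤ S.card := by
  classical
  rcases S.eq_empty_or_nonempty with hSe | ⟨s0, hs0⟩
  · have h0 : ((Finset.range (x - 1)).filter (fun i => CutCol x y n S i)).card = 0 := by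
      rw [Finset.card_eq_zero, Finset.filter_eq_empty_iff]
      intro i _ hc
      obtain ⟨h, k, hk⟩ := hc ⟨0, hy⟩
      simp [hSe] at hk
    simp [h0]
  · set C := (Finset.range (x - 1)).filter (fun i => CutCol x y n S i) with hC
    set g : ℕ × Fin y → Σ e : Fin (x - 1) × Fin y, Fin (n e) := fun q =>
      if h : CutCol x y n S q.1 then
        ⟨(⟨q.1, (h q.2).choose⟩, q.2), (h q.2).choose_spec.choose⟩
      else s0 with hg
    have hcutC : ∀ q ∈ C ×ˢ (Finset.univ : Finset (Fin y)), CutCol x y n S q.1 := by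
      intro q hq
      have := (Finset.mem_product.mp hq).1
      rw [hC, Finset.mem_filter] at this
      exact this.2
    have hmaps : ∀ q ∈ C ×ˢ (Finset.univ : Finset (Fin y)), g q ∈ S := by
      intro q hq
      have hc := hcutC q hq
      simp only [hg, dif_pos hc]
      exact (hc q.2).choose_spec.choose_spec
    have hinj : Set.InjOn g ↑(C ×ˢ (Finset.univ : Finset (Fin y))) := by
      intro q hq q' hq' heq
      rw [Finset.mem_coe] at hq hq'
      have hc := hcutC q hq
      have hc' := hcutC q' hq'
      simp only [hg, dif_pos hc, dif_pos hc'] at heq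
      have h1 := congrArg Sigma.fst heq
      simp only [Prod.mk.injEq, Fin.mk.injEq] at h1
      exact Prod.ext h1.1 h1.2
    have := Finset.card_le_card_of_injOn g hmaps hinj
    rwa [Finset.card_product, Finset.card_univ, Fintype.card_fin] at this
end

/-- If `G` is obtained from the `x × y` grid by subdividing horizontal edges and `S`
is a set of fewer than `p * y` subdivision vertices, then some component of `G − S`
contains at least `x / p` consecutive columns of the grid. -/
theorem stmt8 (x y p : ℕ) (hx : 1 ≤ x) (hy : 1 ≤ y) (hp : 1 ≤ p)
    (n : Fin (x - 1) × Fin y → ℕ)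
    (S : Finset (Σ e : Fin (x - 1) × Fin y, Fin (n e)))
    (hS : S.card < p * y) :
    ∃ a len : ℕ, a + len ≤ x ∧ x ≤ len * p ∧
      ∀ u v : Fin x × Fin y,
        a ≤ (u.1 : ℕ) → (u.1 : ℕ) < a + len → a ≤ (v.1 : ℕ) → (v.1 : ℕ) < a + len →
        ∃ (hu : Sum.inl u ∈ {z : (Fin x × Fin y) ⊕ (Σ e : Fin (x - 1) × Fin y, Fin (n e)) |
              ∀ s ∈ S, z ≠ Sum.inr s})
          (hv : Sum.inl v ∈ {z : (Fin x × Fin y) ⊕ (Σ e : Fin (x - 1) × Fin y, Fin (n e)) |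
              ∀ s ∈ S, z ≠ Sum.inr s}),
          ((gridSubdiv x y n).induce
            {z | ∀ s ∈ S, z ≠ Sum.inr s}).Reachable ⟨Sum.inl u, hu⟩ ⟨Sum.inl v, hv⟩ := by
  classical
  set B := (Finset.range (x - 1)).filter (fun i => CutCol x y n S i) with hB
  have hcard := cut_card (x := x) (n := n) (S := S) hy
  rw [← hB] at hcard
  have hBlt : B.card < p := by
    by_contra h
    push_neg at h
    have : p * y ≤ B.card * y := Nat.mul_le_mul_right y h
    omega
  obtain ⟨a, len, h1, h2, h3⟩ := interval_lemma x p hx hp B hBlt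
  refine ⟨a, len, h1, h2, ?_⟩
  have hlen : 1 ≤ len := by
    rcases Nat.eq_zero_or_pos len with rfl | h
    · omega
    · exact h
  have hax : a < x := by omega
  intro u v hu1 hu2 hv1 hv2
  refine ⟨inl_mem_sdSet x y n S u, inl_mem_sdSet x y n S v, ?_⟩
  show sdReach x y n S u v
  set j0 : Fin y := ⟨0, hy⟩ with hj0
  have hnoCut : ∀ i, a ≤ i → i + 1 < a + len → ¬ CutCol x y n S i := by
    intro i hai hilen hc
    have hix : i < x - 1 := (hc j0).choose
    exact h3 i hai hilen (Finset.mem_filter.mpr ⟨Finset.mem_range.mpr hix, hc⟩)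
  have hchain : ∀ c, a ≤ c → ∀ _hc : c < a + len, ∀ hcx : c < x,
      sdReach x y n S (⟨a, hax⟩, j0) (⟨c, hcx⟩, j0) := by
    intro c hac
    induction c, hac using Nat.le_induction with
    | base => intro _ _; exact sdReach_refl _
    | succ c hac ih =>
      intro hc hcx
      have hcx' : c < x := by omega
      have hc' : c < a + len := by omega
      have hcut := hnoCut c hac hc
      rw [CutCol] at hcut
      push_neg at hcut
      obtain ⟨j, hj⟩ := hcut
      have hix : c < x - 1 := by omega
      have hfree : ∀ k : Fin (n (⟨c, hix⟩, j)),
          (⟨(⟨c, hix⟩, j), k⟩ : Σ e : Fin (x - 1) × Fin y, Fin (n e)) ∉ S := hj hix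
      refine sdReach_trans (ih hc' hcx') ?_
      exact sdReach_trans (sdReach_col _ j0 j)
        (sdReach_trans (sdReach_cross c hix hcx' hcx j hfree) (sdReach_col _ j j0))
  have hru := hchain u.1 hu1 hu2 u.1.isLt
  have hrv := hchain v.1 hv1 hv2 v.1.isLt
  rw [Fin.eta] at hru hrv
  exact sdReach_trans (sdReach_col u.1 u.2 j0)
    (sdReach_trans (sdReach_symm hru)
      (sdReach_trans hrv (sdReach_col v.1 j0 v.2)))
end

section
/- Let h ≥ 1 and let S ⊆ V(G_h) be nonempty. If no connected component of G_h − S has more than |V(G_h)|/2 vertices, then S contains at least one vertex of depth i for every i ∈ {i₀, …, h}, where i₀ := ⌈max{2·log₂|S| + 2, log₂(1 + (h+2)·|S|) − 1}⌉. -/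
/-! ### Auxiliary lemmas -/

instance {h : ℕ} (a v : BT h) : Decidable (IsAncestor a v) := by
  unfold IsAncestor; infer_instance

lemma div_mod_inj {x y m : ℕ} (h1 : x / m = y / m) (h2 : x % m = y % m) : x = y := by
  conv_lhs => rw [← Nat.div_add_mod x m]
  rw [h1, h2, Nat.div_add_mod]

lemma sum_Ico_two_pow (i n : ℕ) (hin : i ≤ n) :
    (∑ k ∈ Finset.Ico i n, 2 ^ k) + 2 ^ i = 2 ^ n := by
  induction n with
  | zero => interval_cases i; simp
  | succ n ih =>
    rcases Nat.lt_or_ge i (n+1) with h' | h'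
    · have hin' : i ≤ n := by omega
      rw [Finset.sum_Ico_succ_top hin', pow_succ]
      have := ih hin'
      omega
    · have : i = n + 1 := by omega
      subst this; simp

lemma filter_sigma_card {h : ℕ} (P : BT h → Prop) [DecidablePred P] :
    (Finset.univ.filter P).card
      = ∑ d : Fin (h+1), (Finset.univ.filter (fun j : Fin (2^(d:ℕ)) => P ⟨d, j⟩)).card := by
  rw [← Finset.card_sigma]
  congr 1
  ext ⟨d, j⟩
  simp [Finset.mem_sigma]

lemma cardD {h i : ℕ} (hi : i ≤ h) :
    (Finset.univ.filter (fun v : BT h => i ≤ (v.1 : ℕ))).card + 2 ^ i = 2 ^ (h + 1) := by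
  rw [filter_sigma_card]
  have : ∀ d : Fin (h+1),
      (Finset.univ.filter (fun _ : Fin (2^(d:ℕ)) => i ≤ ((d:ℕ)))).card
        = if i ≤ (d:ℕ) then 2^(d:ℕ) else 0 := by
    intro d
    by_cases hd : i ≤ (d:ℕ) <;> simp [hd]
  rw [Finset.sum_congr rfl (fun d _ => this d)]
  rw [Fin.sum_univ_eq_sum_range (fun k => if i ≤ k then 2^k else 0)]
  rw [← Finset.sum_filter]
  have : (Finset.range (h+1)).filter (fun k => i ≤ k) = Finset.Ico i (h+1) := by
    ext k; simp [Finset.mem_Ico]; omega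
  rw [this, sum_Ico_two_pow i (h+1) (by omega)]

lemma desc_card {h : ℕ} (a : BT h) :
    (Finset.univ.filter (fun v : BT h => IsAncestor a v)).card + 1 ≤ 2 ^ (h + 1 - (a.1 : ℕ)) := by
  rw [filter_sigma_card]
  have hle : ∀ d : Fin (h+1),
      (Finset.univ.filter (fun j : Fin (2^(d:ℕ)) => IsAncestor a ⟨d, j⟩)).card
        ≤ if (a.1:ℕ) ≤ (d:ℕ) then 2^((d:ℕ) - (a.1:ℕ)) else 0 := by
    intro d
    by_cases hd : (a.1:ℕ) ≤ (d:ℕ)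
    · simp only [hd, if_true]
      rw [← Finset.card_range (2^((d:ℕ) - (a.1:ℕ)))]
      refine Finset.card_le_card_of_injOn (fun j => (j:ℕ) % 2^((d:ℕ) - (a.1:ℕ))) ?_ ?_
      · intro j hj
        exact Finset.mem_range.mpr (Nat.mod_lt _ (Nat.pow_pos (by norm_num)))
      · intro j1 h1 j2 h2 he
        simp only [Finset.mem_coe, Finset.mem_filter] at h1 h2
        have e1 : (a.2:ℕ) = (j1:ℕ) / 2^((d:ℕ) - (a.1:ℕ)) := h1.2.2
        have e2 : (a.2:ℕ) = (j2:ℕ) / 2^((d:ℕ) - (a.1:ℕ)) := h2.2.2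
        have he' : (j1:ℕ) % 2^((d:ℕ) - (a.1:ℕ)) = (j2:ℕ) % 2^((d:ℕ) - (a.1:ℕ)) := he
        have e3 : (j1:ℕ) / 2^((d:ℕ) - (a.1:ℕ)) = (j2:ℕ) / 2^((d:ℕ) - (a.1:ℕ)) :=
          e1.symm.trans e2
        exact Fin.ext (div_mod_inj e3 he')
    · have : (Finset.univ.filter (fun j : Fin (2^(d:ℕ)) => IsAncestor a ⟨d, j⟩)) = ∅ := by
        ext j; simp only [Finset.mem_filter, Finset.notMem_empty, iff_false]
        rintro ⟨-, ⟨hle, -⟩⟩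
        exact hd hle
      simp [this]
  calc (∑ d : Fin (h+1), (Finset.univ.filter (fun j : Fin (2^(d:ℕ)) => IsAncestor a ⟨d, j⟩)).card) + 1
      ≤ (∑ d : Fin (h+1), if (a.1:ℕ) ≤ (d:ℕ) then 2^((d:ℕ) - (a.1:ℕ)) else 0) + 1 :=
        Nat.add_le_add_right (Finset.sum_le_sum (fun d _ => hle d)) 1
    _ = 2 ^ (h + 1 - (a.1:ℕ)) := by
        rw [Fin.sum_univ_eq_sum_range (fun k => if (a.1:ℕ) ≤ k then 2^(k - (a.1:ℕ)) else 0)]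
        rw [← Finset.sum_filter]
        have h1 : (Finset.range (h+1)).filter (fun k => (a.1:ℕ) ≤ k) = Finset.Ico (a.1:ℕ) (h+1) := by
          ext k; simp [Finset.mem_Ico]; omega
        rw [h1, Finset.sum_Ico_eq_sum_range]
        simp only [Nat.add_sub_cancel_left]
        have h2 := sum_Ico_two_pow 0 (h + 1 - (a.1:ℕ)) (by omega)
        rw [← Finset.range_eq_Ico, pow_zero] at h2
        exact h2

lemma ancestor_refl {h : ℕ} (v : BT h) : IsAncestor v v :=
  ⟨le_refl _, by simp⟩

lemma ancestor_trans {h : ℕ} {a b c : BT h} (hab : IsAncestor a b) (hbc : IsAncestor b c) :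
    IsAncestor a c := by
  obtain ⟨l1, e1⟩ := hab
  obtain ⟨l2, e2⟩ := hbc
  refine ⟨le_trans l1 l2, ?_⟩
  rw [e1, e2, Nat.div_div_eq_div_mul, ← pow_add]
  congr 2
  omega

lemma parent_ancestor {h : ℕ} {p v : BT h} (hp : IsParent p v) : IsAncestor p v := by
  obtain ⟨l, e⟩ := hp
  refine ⟨by omega, ?_⟩
  have : (v.1:ℕ) - (p.1:ℕ) = 1 := by omega
  rw [this, pow_one, e]

lemma bt_eq {h : ℕ} (v w : BT h) (e1 : (v.1:ℕ) = (w.1:ℕ)) (e2 : (v.2:ℕ) = (w.2:ℕ)) :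
    v = w := by
  obtain ⟨⟨d1, hd1⟩, j1⟩ := v
  obtain ⟨⟨d2, hd2⟩, j2⟩ := w
  have hd : d1 = d2 := e1
  subst hd
  have hj : j1 = j2 := Fin.ext e2
  subst hj
  rfl

lemma bt_parent {h : ℕ} (v : BT h) (hd : 1 ≤ (v.1:ℕ)) :
    ∃ p : BT h, IsParent p v ∧ (p.1:ℕ) + 1 = (v.1:ℕ) := by
  have h1 : (v.1:ℕ) - 1 < h + 1 := by have := (v.1).isLt; omega
  have h2 : (v.2:ℕ)/2 < 2^((v.1:ℕ)-1) := by
    have hj := (v.2).isLt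
    have he : (2:ℕ)^(v.1:ℕ) = 2^((v.1:ℕ)-1)*2 := by
      rw [← pow_succ]; congr 1; omega
    omega
  refine ⟨⟨⟨(v.1:ℕ)-1, h1⟩, ⟨(v.2:ℕ)/2, h2⟩⟩, ⟨?_, rfl⟩, ?_⟩ <;> simp <;> omega

lemma bt_left {h : ℕ} (v : BT h) (hj : 1 ≤ (v.2:ℕ)) :
    ∃ w : BT h, (w.1:ℕ) = (v.1:ℕ) ∧ (w.2:ℕ) + 1 = (v.2:ℕ) := by
  have h2 : (v.2:ℕ) - 1 < 2^(v.1:ℕ) := by have := (v.2).isLt; omega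
  exact ⟨⟨v.1, ⟨(v.2:ℕ)-1, h2⟩⟩, rfl, by simp; omega⟩

/-- If `S ⊆ V(G_h)` is nonempty and no component of `G_h − S` has more than
`|V(G_h)| / 2 = (2 ^ (h + 1) - 1) / 2` vertices, then `S` contains a vertex of depth
`i` for every `i ∈ {i₀, …, h}` with
`i₀ = ⌈max (2 log₂ |S| + 2) (log₂ (1 + (h + 2) |S|) - 1)⌉`. -/
theorem stmt10 (h : ℕ) (hh : 1 ≤ h) (S : Finset (BT h)) (hS : S.Nonempty)
    (hcomp : ∀ C : ((gGraph h).induce {u : BT h | u ∉ S}).ConnectedComponent,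
      C.supp.ncard * 2 ≤ 2 ^ (h + 1) - 1)
    (i : ℕ) (hi : i ≤ h)
    (hi0 : max (2 * Real.logb 2 S.card + 2)
      (Real.logb 2 (1 + ((h : ℝ) + 2) * S.card) - 1) ≤ (i : ℝ)) :
    ∃ v ∈ S, (v.1 : ℕ) = i := by
  classical
  by_contra hno
  push_neg at hno
  have hs1 : 1 ≤ S.card := hS.card_pos
  -- arithmetic: 4 |S| ≤ 2 ^ i
  have hcard4 : 4 * S.card ≤ 2 ^ i := by
    have h1 : 2 * Real.logb 2 (S.card:ℝ) + 2 ≤ (i:ℝ) := le_trans (le_max_left _ _) hi0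
    have hspos : (0:ℝ) < (S.card:ℝ) := by exact_mod_cast hs1
    have hs1' : (1:ℝ) ≤ (S.card:ℝ) := by exact_mod_cast hs1
    have hlog : (2:ℝ) ^ (Real.logb 2 (S.card:ℝ)) = (S.card:ℝ) :=
      Real.rpow_logb (by norm_num) (by norm_num) hspos
    have hmono : (2:ℝ) ^ (2 * Real.logb 2 (S.card:ℝ) + 2) ≤ (2:ℝ) ^ ((i:ℕ):ℝ) :=
      Real.rpow_le_rpow_of_exponent_le (by norm_num) h1
    have hsplit : (2:ℝ) ^ (2 * Real.logb 2 (S.card:ℝ) + 2)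
        = (S.card:ℝ) * (S.card:ℝ) * ((2:ℝ)^(1:ℝ) * (2:ℝ)^(1:ℝ)) := by
      rw [show 2 * Real.logb 2 (S.card:ℝ) + 2
          = Real.logb 2 (S.card:ℝ) + (Real.logb 2 (S.card:ℝ) + (1 + 1)) by ring]
      rw [Real.rpow_add (by norm_num), Real.rpow_add (by norm_num),
        Real.rpow_add (by norm_num), hlog]
      ring
    rw [Real.rpow_one] at hsplit
    have hnat : ((4 * S.card : ℕ):ℝ) ≤ ((2^i : ℕ):ℝ) := by
      push_cast
      have h2 : (2:ℝ) ^ ((i:ℕ):ℝ) = (2:ℝ)^(i:ℕ) := Real.rpow_natCast 2 i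
      nlinarith [hmono, hsplit, hs1', h2]
    exact_mod_cast hnat
  -- no vertex of depth i lies in S
  have hSdep : ∀ v : BT h, (v.1:ℕ) = i → v ∉ S := fun v hv hvS => hno v hvS hv
  have hi' : i < h + 1 := by omega
  obtain ⟨r, hr1, hr2⟩ : ∃ r : BT h, (r.1:ℕ) = i ∧ (r.2:ℕ) = 0 :=
    ⟨⟨⟨i, hi'⟩, ⟨0, by positivity⟩⟩, rfl, rfl⟩
  have hrS : r ∉ S := hSdep r hr1
  -- Good vertices: depth ≥ i and no ancestor of depth ≥ i in S
  set Good : Finset (BT h) := Finset.univ.filter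
    (fun v : BT h => i ≤ (v.1:ℕ) ∧ ∀ a : BT h, IsAncestor a v → i ≤ (a.1:ℕ) → a ∉ S)
    with hGood
  have goodNot : ∀ v ∈ Good, v ∉ S := by
    intro v hv
    rw [hGood, Finset.mem_filter] at hv
    exact hv.2.2 v (ancestor_refl v) hv.2.1
  -- reachability: horizontal along depth i
  have horiz : ∀ j : ℕ, ∀ v : BT h, ∀ hvS : v ∉ S, (v.1:ℕ) = i → (v.2:ℕ) = j →
      ((gGraph h).induce {u : BT h | u ∉ S}).Reachable ⟨r, hrS⟩ ⟨v, hvS⟩ := by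
    intro j
    induction j with
    | zero =>
      intro v hvS h1 h2
      have : v = r := bt_eq v r (by omega) (by omega)
      subst this
      exact SimpleGraph.Reachable.refl _
    | succ j ih =>
      intro v hvS h1 h2
      obtain ⟨w, hw1, hw2⟩ := bt_left v (by omega)
      have hwS : w ∉ S := hSdep w (by omega)
      have hadj : ((gGraph h).induce {u : BT h | u ∉ S}).Adj ⟨w, hwS⟩ ⟨v, hvS⟩ := by
        show (gGraph h).Adj w v
        rw [gGraph, SimpleGraph.fromRel_adj]
        refine ⟨?_, Or.inl (Or.inr ⟨hw1, hw2⟩)⟩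
        intro e
        have := congrArg (fun z : BT h => (z.2:ℕ)) e
        omega
      exact (ih w hwS (by omega) (by omega)).trans hadj.reachable
  -- reachability: vertical
  have vert : ∀ n : ℕ, ∀ v : BT h, ∀ hvS : v ∉ S, v ∈ Good → (v.1:ℕ) = i + n →
      ((gGraph h).induce {u : BT h | u ∉ S}).Reachable ⟨r, hrS⟩ ⟨v, hvS⟩ := by
    intro n
    induction n with
    | zero =>
      intro v hvS _ h1
      exact horiz (v.2:ℕ) v hvS (by omega) rfl
    | succ n ih =>
      intro v hvS hvG h1
      rw [hGood, Finset.mem_filter] at hvG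
      obtain ⟨-, hvi, hvanc⟩ := hvG
      obtain ⟨p, hpar, hpd⟩ := bt_parent v (by omega)
      have hpanc : IsAncestor p v := parent_ancestor hpar
      have hpS : p ∉ S := hvanc p hpanc (by omega)
      have hpG : p ∈ Good := by
        rw [hGood, Finset.mem_filter]
        exact ⟨Finset.mem_univ _, by omega,
          fun a ha hai => hvanc a (ancestor_trans ha hpanc) hai⟩
      have hadj : ((gGraph h).induce {u : BT h | u ∉ S}).Adj ⟨p, hpS⟩ ⟨v, hvS⟩ := by
        show (gGraph h).Adj p v
        rw [gGraph, SimpleGraph.fromRel_adj]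
        refine ⟨?_, Or.inl (Or.inl hpar)⟩
        intro e
        have := congrArg (fun z : BT h => (z.1:ℕ)) e
        omega
      exact (ih p hpS hpG (by omega)).trans hadj.reachable
  -- Good is inside the component of r
  have hsub : Good ⊆ (((gGraph h).induce {u : BT h | u ∉ S}).connectedComponentMk
      ⟨r, hrS⟩).supp.toFinset.image Subtype.val := by
    intro v hv
    have hvS := goodNot v hv
    rw [Finset.mem_image]
    refine ⟨⟨v, hvS⟩, ?_, rfl⟩
    rw [Set.mem_toFinset, SimpleGraph.ConnectedComponent.mem_supp_iff]
    exact SimpleGraph.ConnectedComponent.sound ((vert ((v.1:ℕ) - i) v hvS hv (by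
      rw [hGood, Finset.mem_filter] at hv; omega)).symm)
  -- the card bound from hcomp
  have hGoodBound : Good.card * 2 ≤ 2 ^ (h + 1) - 1 := by
    have h1 := Finset.card_le_card hsub
    rw [Finset.card_image_of_injective _ Subtype.val_injective] at h1
    have h2 := hcomp (((gGraph h).induce {u : BT h | u ∉ S}).connectedComponentMk ⟨r, hrS⟩)
    rw [Set.ncard_eq_toFinset_card'] at h2
    omega
  -- Bad vertices
  set Bad : Finset (BT h) := Finset.univ.filter
    (fun v : BT h => i ≤ (v.1:ℕ) ∧ ∃ a ∈ S, IsAncestor a v ∧ i + 1 ≤ (a.1:ℕ)) with hBadDef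
  have hDsub : Finset.univ.filter (fun v : BT h => i ≤ (v.1:ℕ)) ⊆ Good ∪ Bad := by
    intro v hv
    rw [Finset.mem_filter] at hv
    rw [Finset.mem_union]
    by_cases hg : ∀ a : BT h, IsAncestor a v → i ≤ (a.1:ℕ) → a ∉ S
    · left
      rw [hGood, Finset.mem_filter]
      exact ⟨Finset.mem_univ _, hv.2, hg⟩
    · right
      push_neg at hg
      obtain ⟨a, ha1, ha2, ha3⟩ := hg
      rw [hBadDef, Finset.mem_filter]
      refine ⟨Finset.mem_univ _, hv.2, a, ha3, ha1, ?_⟩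
      have := hno a ha3
      omega
  have hBadBound : Bad.card ≤ S.card * (2 ^ (h - i) - 1) := by
    have hsub2 : Bad ⊆ (S.filter (fun a => i + 1 ≤ (a.1:ℕ))).biUnion
        (fun a => Finset.univ.filter (fun v => IsAncestor a v)) := by
      intro v hv
      rw [hBadDef, Finset.mem_filter] at hv
      obtain ⟨-, -, a, haS, haanc, hai⟩ := hv
      rw [Finset.mem_biUnion]
      exact ⟨a, Finset.mem_filter.mpr ⟨haS, hai⟩,
        Finset.mem_filter.mpr ⟨Finset.mem_univ _, haanc⟩⟩
    calc Bad.card ≤ _ := Finset.card_le_card hsub2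
      _ ≤ ∑ a ∈ S.filter (fun a => i + 1 ≤ (a.1:ℕ)),
          (Finset.univ.filter (fun v => IsAncestor a v)).card := Finset.card_biUnion_le
      _ ≤ ∑ _a ∈ S.filter (fun a => i + 1 ≤ (a.1:ℕ)), (2 ^ (h - i) - 1) := by
          refine Finset.sum_le_sum ?_
          intro a ha
          rw [Finset.mem_filter] at ha
          have hd := desc_card a
          have hle : (2:ℕ) ^ (h + 1 - (a.1:ℕ)) ≤ 2 ^ (h - i) :=
            Nat.pow_le_pow_right (by norm_num) (by omega)
          omega
      _ = (S.filter (fun a => i + 1 ≤ (a.1:ℕ))).card * (2 ^ (h - i) - 1) := by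
          rw [Finset.sum_const, smul_eq_mul]
      _ ≤ S.card * (2 ^ (h - i) - 1) :=
          Nat.mul_le_mul_right _ (Finset.card_filter_le _ _)
  -- final arithmetic
  have hDcard := cardD (h := h) hi
  have hDle : (Finset.univ.filter (fun v : BT h => i ≤ (v.1:ℕ))).card
      ≤ Good.card + Bad.card :=
    (Finset.card_le_card hDsub).trans (Finset.card_union_le _ _)
  have hkey : S.card * (2 ^ (h - i) - 1) + 2 ^ i ≤ 2 ^ h := by
    rcases eq_or_lt_of_le hi with rfl | hlt
    · simp
    · have e1 : (2:ℕ) ^ i * 2 ^ (h - i) = 2 ^ h := by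
        rw [← pow_add]; congr 1; omega
      have e2 : 2 * (2:ℕ) ^ i ≤ 2 ^ h := by
        calc 2 * (2:ℕ) ^ i = 2 ^ (i + 1) := by rw [pow_succ]; ring
          _ ≤ 2 ^ h := Nat.pow_le_pow_right (by norm_num) (by omega)
      have e3 : 4 * (S.card * 2 ^ (h - i)) ≤ 2 ^ i * 2 ^ (h - i) := by
        rw [← mul_assoc]
        exact Nat.mul_le_mul_right _ hcard4
      have e3' : 4 * (S.card * 2 ^ (h - i)) ≤ 2 ^ h := e1 ▸ e3
      have e4 : S.card * (2 ^ (h - i) - 1) ≤ S.card * 2 ^ (h - i) :=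
        Nat.mul_le_mul_left _ (Nat.sub_le _ _)
      clear e1 e3
      obtain ⟨X, hX⟩ : ∃ X, S.card * 2 ^ (h - i) = X := ⟨_, rfl⟩
      obtain ⟨Z, hZ⟩ : ∃ Z, S.card * (2 ^ (h - i) - 1) = Z := ⟨_, rfl⟩
      obtain ⟨Q, hQ⟩ : ∃ Q, (2:ℕ) ^ i = Q := ⟨_, rfl⟩
      obtain ⟨H2, hH2⟩ : ∃ H2, (2:ℕ) ^ h = H2 := ⟨_, rfl⟩
      rw [hX, hH2] at e3'
      rw [hX, hZ] at e4
      rw [hQ, hH2] at e2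
      rw [hZ, hQ, hH2]
      omega
  have h2h : (2:ℕ) ^ (h + 1) = 2 * 2 ^ h := by rw [pow_succ]; ring
  have hH2pos : 1 ≤ (2:ℕ) ^ h := Nat.one_le_two_pow
  obtain ⟨Dc, hDc⟩ : ∃ D, (Finset.univ.filter (fun v : BT h => i ≤ (v.1:ℕ))).card = D := ⟨_, rfl⟩
  obtain ⟨Z, hZ⟩ : ∃ Z, S.card * (2 ^ (h - i) - 1) = Z := ⟨_, rfl⟩
  obtain ⟨Q, hQ⟩ : ∃ Q, (2:ℕ) ^ i = Q := ⟨_, rfl⟩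
  obtain ⟨H2, hH2⟩ : ∃ H2, (2:ℕ) ^ h = H2 := ⟨_, rfl⟩
  obtain ⟨H1, hH1⟩ : ∃ H1, (2:ℕ) ^ (h+1) = H1 := ⟨_, rfl⟩
  rw [hDc, hQ, hH1] at hDcard
  rw [hDc] at hDle
  rw [hZ] at hBadBound
  rw [hZ, hQ, hH2] at hkey
  rw [hH1] at hGoodBound
  rw [hH1, hH2] at h2h
  rw [hH2] at hH2pos
  clear hi0 hcomp hsub hDsub horiz vert hSdep hno hrS hr2 hr1 hs1 hS goodNot hcard4 hBadDef hGood hDc hZ hQ hH2 hH1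
  omega
end

section
/- Let 𝓡 := {R₁, …, R_q} be a (k, ℓ, m)-compact set in T_h, and let S ⊆ V(T_h) with ⋃𝓡 ⊆ S and 1 ≤ |S| < 2^{m−ℓ−2}. Then there exists a (2k, ℓ + log₂|S| + 2, m)-compact set 𝓡' := {R₁', …, R_q'} in T_h that is compatible with S. -/
/-- `v` is compatible with `S`: the parent of `v` is in `S` and `T_h − S` contains a
path from `v` to a leaf of `T_h`. -/
def CompatibleVert {h : ℕ} (S : Finset (BT h)) (v : BT h) : Prop :=
  (∃ p : BT h, IsParent p v ∧ p ∈ S) ∧ ReachesLeafAvoiding (S : Set (BT h)) v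

/-- `R = {R 1, …, R q}` is a `(k, ℓ, m)`-compact family in `T_h`: every part is
unrelated of size at least `k`; the part `R i` has a common ancestor `a i` at
`T_h`-distance at most `ℓ` from each of its elements; and `a 1, …, a q` are
unrelated and each has height at least `m`. -/
def CompactFam {h : ℕ} (k : ℕ) (ℓ m : ℝ) {q : ℕ} (R : Fin q → Finset (BT h)) : Prop :=
  ∃ a : Fin q → BT h,
    (∀ i, Unrelated (R i : Set (BT h)) ∧ k ≤ (R i).card) ∧
    (∀ i, ∀ v ∈ R i, IsAncestor (a i) v ∧ (((btTree h).dist v (a i) : ℕ) : ℝ) ≤ ℓ) ∧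
    (∀ i j : Fin q, i ≠ j → ¬IsAncestor (a i) (a j)) ∧
    (∀ i, m ≤ (h : ℝ) - (((a i).1 : ℕ) : ℝ))

namespace BTP

variable {h : ℕ}

lemma BT_ext {u v : BT h} (h1 : ((u.1 : Fin (h+1)) : ℕ) = ((v.1 : Fin (h+1)) : ℕ))
    (h2 : ((u.2) : ℕ) = ((v.2) : ℕ)) : u = v := by
  obtain ⟨⟨a, ha⟩, ⟨b, hb⟩⟩ := u
  obtain ⟨⟨a', ha'⟩, ⟨b', hb'⟩⟩ := v
  simp only at h1 h2
  subst h1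
  simp only [Fin.mk.injEq] at h2 ⊢
  exact Sigma.ext rfl (heq_of_eq (Fin.ext h2))

lemma depth_le (u : BT h) : (u.1 : ℕ) ≤ h := Nat.lt_succ_iff.mp u.1.isLt

/-- The vertex at depth `d` on the path from the root to the leaf with index `L`. -/
def anc (h : ℕ) (L d : ℕ) (hL : L < 2 ^ h) (hd : d ≤ h) : BT h :=
  ⟨⟨d, by omega⟩, ⟨L / 2 ^ (h - d), by
    apply Nat.div_lt_of_lt_mul
    calc L < 2 ^ h := hL
    _ = 2 ^ (h - d) * 2 ^ d := by rw [← pow_add]; congr 1; omega⟩⟩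

@[simp] lemma anc_fst {L d : ℕ} (hL : L < 2 ^ h) (hd : d ≤ h) :
    (((anc h L d hL hd).1 : Fin (h+1)) : ℕ) = d := rfl

@[simp] lemma anc_snd {L d : ℕ} (hL : L < 2 ^ h) (hd : d ≤ h) :
    (((anc h L d hL hd).2) : ℕ) = L / 2 ^ (h - d) := rfl

lemma isAncestor_anc {L d d' : ℕ} (hL : L < 2 ^ h) (hd : d ≤ h) (hd' : d' ≤ h) (hdd : d ≤ d') :
    IsAncestor (anc h L d hL hd) (anc h L d' hL hd') := by
  refine ⟨by simp [hdd], ?_⟩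
  simp only [anc_fst, anc_snd]
  rw [Nat.div_div_eq_div_mul, ← pow_add]
  congr 2
  omega

lemma isParent_anc {L d : ℕ} (hL : L < 2 ^ h) (hd : d + 1 ≤ h) :
    IsParent (anc h L d hL (by omega)) (anc h L (d+1) hL hd) := by
  refine ⟨rfl, ?_⟩
  simp only [anc_fst, anc_snd]
  rw [Nat.div_div_eq_div_mul]
  congr 1
  rw [← pow_succ]
  congr 1
  omega

lemma eq_anc {u : BT h} {L : ℕ} (hL : L < 2 ^ h) (hu : (u.2 : ℕ) = L / 2 ^ (h - (u.1 : ℕ))) :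
    u = anc h L (u.1 : ℕ) hL (depth_le u) :=
  BT_ext rfl hu

lemma isAncestor_refl (v : BT h) : IsAncestor v v := ⟨le_rfl, by simp⟩

lemma isAncestor_trans {a b c : BT h} (h1 : IsAncestor a b) (h2 : IsAncestor b c) :
    IsAncestor a c := by
  refine ⟨le_trans h1.1 h2.1, ?_⟩
  rw [h1.2, h2.2, Nat.div_div_eq_div_mul, ← pow_add]
  congr 2
  have := h1.1; have := h2.1
  omega

lemma isAncestor_comparable {a b v : BT h} (h1 : IsAncestor a v) (h2 : IsAncestor b v)
    (hab : (a.1 : ℕ) ≤ (b.1 : ℕ)) : IsAncestor a b := by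
  refine ⟨hab, ?_⟩
  rw [h1.2, h2.2, Nat.div_div_eq_div_mul, ← pow_add]
  congr 2
  have := h2.1
  omega

lemma eq_of_isAncestor_depth {a v : BT h} (h1 : IsAncestor a v) (h2 : (a.1 : ℕ) = (v.1 : ℕ)) :
    a = v := by
  refine BT_ext h2 ?_
  rw [h1.2, h2]
  simp

lemma ancestor_eq_anc {a : BT h} {L d : ℕ} {hL : L < 2 ^ h} {hd : d ≤ h}
    (ha : IsAncestor a (anc h L d hL hd)) : a = anc h L (a.1 : ℕ) hL (depth_le a) := by
  apply eq_anc
  have h1 := ha.1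
  have h2 := ha.2
  simp only [anc_fst, anc_snd] at h1 h2
  rw [h2, Nat.div_div_eq_div_mul, ← pow_add]
  congr 2
  omega

end BTP
namespace BTP

variable {h : ℕ}

/-- The `b`-th child of `v` (junk value `v` itself if `v` is a leaf). -/
def child (v : BT h) (b : Fin 2) : BT h :=
  if hv : (v.1 : ℕ) < h then
    ⟨⟨(v.1 : ℕ) + 1, by omega⟩, ⟨2 * (v.2 : ℕ) + (b : ℕ), by
      have h1 := v.2.isLt
      have h2 := b.isLt
      show 2 * (v.2 : ℕ) + (b : ℕ) < 2 ^ ((v.1 : ℕ) + 1)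
      rw [pow_succ]
      omega⟩⟩
  else v

lemma child_fst {v : BT h} (hv : (v.1 : ℕ) < h) (b : Fin 2) :
    (((child v b).1 : Fin (h+1)) : ℕ) = (v.1 : ℕ) + 1 := by
  rw [child, dif_pos hv]

lemma child_snd {v : BT h} (hv : (v.1 : ℕ) < h) (b : Fin 2) :
    (((child v b).2) : ℕ) = 2 * (v.2 : ℕ) + (b : ℕ) := by
  rw [child, dif_pos hv]

lemma isParent_child {v : BT h} (hv : (v.1 : ℕ) < h) (b : Fin 2) :
    IsParent v (child v b) := by
  refine ⟨by rw [child_fst hv], ?_⟩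
  rw [child_snd hv]
  omega

lemma isAncestor_of_isParent {p v : BT h} (hp : IsParent p v) : IsAncestor p v := by
  have h1 := hp.1
  refine ⟨by omega, ?_⟩
  have he : (v.1 : ℕ) - (p.1 : ℕ) = 1 := by omega
  rw [he, pow_one]
  exact hp.2.symm

lemma isAncestor_child {v : BT h} (hv : (v.1 : ℕ) < h) (b : Fin 2) :
    IsAncestor v (child v b) := isAncestor_of_isParent (isParent_child hv b)

lemma anc_congr {L d d' : ℕ} (hL : L < 2 ^ h) (hd : d ≤ h) (hd' : d' ≤ h) (e : d = d') :
    anc h L d hL hd = anc h L d' hL hd' := by subst e; rfl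

lemma adj_of_isParent {p v : BT h} (hp : IsParent p v) : (btTree h).Adj p v := by
  rw [btTree, SimpleGraph.fromRel_adj]
  refine ⟨?_, Or.inl hp⟩
  intro he
  have := hp.1
  rw [he] at this
  omega

lemma chain_walk (L : ℕ) (hL : L < 2 ^ h) {d : ℕ} (hd : d ≤ h) :
    ∀ n (hdn : d + n ≤ h), ∃ W : (btTree h).Walk (anc h L (d + n) hL hdn) (anc h L d hL hd),
      W.length = n := by
  intro n
  induction n with
  | zero => intro hdn; exact ⟨SimpleGraph.Walk.nil.copy (BT_ext (by simp) (by simp)) rfl, by simp⟩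
  | succ n ih =>
    intro hdn
    obtain ⟨W, hW⟩ := ih (by omega)
    have hadj : (btTree h).Adj (anc h L (d + n) hL (by omega)) (anc h L (d + n + 1) hL (by omega)) :=
      adj_of_isParent (isParent_anc hL (by omega))
    refine ⟨(SimpleGraph.Walk.cons hadj.symm W).copy (anc_congr hL _ _ (by omega)) rfl, ?_⟩
    simp [hW]

lemma walk_depth_le {u v : BT h} (W : (btTree h).Walk u v) : (u.1 : ℕ) ≤ (v.1 : ℕ) + W.length := by
  induction W with
  | nil => simp
  | @cons a x c hadj p ih =>
    rw [btTree, SimpleGraph.fromRel_adj] at hadj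
    have h2 := hadj.2
    have : (x.1 : ℕ) = (a.1 : ℕ) + 1 ∨ (a.1 : ℕ) = (x.1 : ℕ) + 1 := by
      rcases h2 with hp | hp
      · exact Or.inl hp.1
      · exact Or.inr hp.1
    simp only [SimpleGraph.Walk.length_cons]
    omega

/-- Left-most leaf below `v`. -/
lemma leftLeaf_lt (v : BT h) : (v.2 : ℕ) * 2 ^ (h - (v.1 : ℕ)) < 2 ^ h := by
  have h1 := v.2.isLt
  have hp : 0 < 2 ^ (h - (v.1 : ℕ)) := Nat.pow_pos (by norm_num)
  calc (v.2 : ℕ) * 2 ^ (h - (v.1 : ℕ)) < 2 ^ (v.1 : ℕ) * 2 ^ (h - (v.1 : ℕ)) :=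
        Nat.mul_lt_mul_of_pos_right h1 hp
  _ = 2 ^ h := by rw [← pow_add]; congr 1; exact Nat.add_sub_cancel' (depth_le v)

lemma self_eq_anc (v : BT h) :
    v = anc h ((v.2 : ℕ) * 2 ^ (h - (v.1 : ℕ))) (v.1 : ℕ) (leftLeaf_lt v) (depth_le v) :=
  eq_anc _ (by rw [Nat.mul_div_cancel _ (Nat.pow_pos (by norm_num))])

lemma dist_le_of_ancestor {a v : BT h} (ha : IsAncestor a v) :
    (btTree h).dist v a ≤ (v.1 : ℕ) - (a.1 : ℕ) := by
  have hv := self_eq_anc v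
  have ha2 : IsAncestor a (anc h _ _ (leftLeaf_lt v) (depth_le v)) := hv ▸ ha
  have haa := ancestor_eq_anc ha2
  have hle : (a.1 : ℕ) ≤ (v.1 : ℕ) := ha.1
  obtain ⟨W, hW⟩ := chain_walk _ (leftLeaf_lt v) (depth_le a) ((v.1 : ℕ) - (a.1 : ℕ))
      (by omega)
  have he : (a.1 : ℕ) + ((v.1 : ℕ) - (a.1 : ℕ)) = (v.1 : ℕ) := by omega
  rw [hv, haa]
  calc (btTree h).dist (anc h _ _ _ (depth_le v)) (anc h _ _ _ (depth_le a))
      ≤ (W.copy (anc_congr _ _ _ he) rfl).length := SimpleGraph.dist_le _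
  _ = ((v.1 : ℕ) - (a.1 : ℕ)) := by rw [SimpleGraph.Walk.length_copy, hW]

lemma depth_sub_le_dist {a v : BT h} (ha : IsAncestor a v) :
    (v.1 : ℕ) - (a.1 : ℕ) ≤ (btTree h).dist v a := by
  have hv := self_eq_anc v
  have haa := ancestor_eq_anc (hv ▸ ha)
  have hle : (a.1 : ℕ) ≤ (v.1 : ℕ) := ha.1
  obtain ⟨W, hW⟩ := chain_walk _ (leftLeaf_lt v) (depth_le a) ((v.1 : ℕ) - (a.1 : ℕ))
      (by omega)
  have he : (a.1 : ℕ) + ((v.1 : ℕ) - (a.1 : ℕ)) = (v.1 : ℕ) := by omega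
  have hreach : (btTree h).Reachable v a := by
    rw [hv, haa]
    exact ⟨W.copy (anc_congr _ _ _ he) rfl⟩
  obtain ⟨P, hP⟩ := SimpleGraph.Reachable.exists_walk_length_eq_dist hreach
  have := walk_depth_le P
  omega

lemma chain_reach_induced (L : ℕ) (hL : L < 2 ^ h) (S : Set (BT h)) :
    ∀ n d (hd : d + n = h) (hnot : ∀ e (he1 : d ≤ e) (he : e ≤ h), anc h L e hL he ∉ S),
      ((btTree h).induce {u : BT h | u ∉ S}).Reachable
        ⟨anc h L d hL (by omega), hnot d le_rfl (by omega)⟩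
        ⟨anc h L h hL le_rfl, hnot h (by omega) le_rfl⟩ := by
  intro n
  induction n with
  | zero =>
    intro d hd hnot
    have hdh : d = h := by omega
    subst hdh
    rfl
  | succ n ih =>
    intro d hd hnot
    have hstep : ((btTree h).induce {u : BT h | u ∉ S}).Adj
        ⟨anc h L d hL (by omega), hnot d le_rfl (by omega)⟩
        ⟨anc h L (d+1) hL (by omega), hnot (d+1) (by omega) (by omega)⟩ := by
      show (btTree h).Adj _ _
      exact adj_of_isParent (isParent_anc hL (by omega))
    exact hstep.reachable.trans (ih (d+1) (by omega) (fun e he1 he => hnot e (by omega) he))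

end BTP
namespace BTP

variable {h : ℕ}

lemma main_exists (S : Finset (BT h)) {t : ℕ} (ht : 2 ≤ t) (hcard : S.card < 2 ^ (t - 1))
    (v : BT h) (hvS : v ∈ S) (hdepth : (v.1 : ℕ) + t ≤ h) (b : Fin 2) :
    ∃ w : BT h, IsAncestor (child v b) w ∧ (w.1 : ℕ) ≤ (v.1 : ℕ) + t ∧ CompatibleVert S w := by
  classical
  set D := (v.1 : ℕ) + t with hD
  have hvh : (v.1 : ℕ) < h := by omega
  set c2 := 2 * (v.2 : ℕ) + (b : ℕ) with hc2def
  have hb := b.isLt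
  have hv2 := v.2.isLt
  have hc2 : c2 + 1 ≤ 2 ^ ((v.1 : ℕ) + 1) := by rw [pow_succ]; omega
  -- choose an index j at depth D below the child whose subtree avoids S
  set f : BT h → ℕ := fun u => (u.2 : ℕ) / 2 ^ ((u.1 : ℕ) - D) with hf
  set cand := Finset.Ico (c2 * 2 ^ (t - 1)) ((c2 + 1) * 2 ^ (t - 1)) with hcand
  have hcandcard : cand.card = 2 ^ (t - 1) := by
    rw [hcand, Nat.card_Ico]
    have : (c2 + 1) * 2 ^ (t - 1) = c2 * 2 ^ (t - 1) + 2 ^ (t - 1) := by ring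
    omega
  obtain ⟨j, hjc, hjim⟩ : ∃ j ∈ cand, j ∉ S.image f := by
    by_contra hcon
    push_neg at hcon
    have hsub2 : cand ⊆ S.image f := fun x hx => hcon x hx
    have h1 := Finset.card_le_card hsub2
    have h2 := Finset.card_image_le (f := f) (s := S)
    omega
  rw [hcand, Finset.mem_Ico] at hjc
  have hj2 : j < 2 ^ D := by
    calc j < (c2 + 1) * 2 ^ (t - 1) := hjc.2
    _ ≤ 2 ^ ((v.1 : ℕ) + 1) * 2 ^ (t - 1) := Nat.mul_le_mul_right _ hc2
    _ = 2 ^ D := by rw [← pow_add]; congr 1; omega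
  set L := j * 2 ^ (h - D) with hLdef
  have hL : L < 2 ^ h := by
    calc L < 2 ^ D * 2 ^ (h - D) :=
          Nat.mul_lt_mul_of_pos_right hj2 (Nat.pow_pos (by norm_num))
    _ = 2 ^ h := by rw [← pow_add]; congr 1; omega
  have hpow : ∀ n : ℕ, (0:ℕ) < 2 ^ n := fun n => Nat.pow_pos (by norm_num)
  have n1 : L / 2 ^ (h - D) = j := Nat.mul_div_cancel _ (hpow _)
  have n2 : ∀ d, d ≤ D → L / 2 ^ (h - d) = j / 2 ^ (D - d) := by
    intro d hdD
    have he : 2 ^ (h - d) = 2 ^ (h - D) * 2 ^ (D - d) := by rw [← pow_add]; congr 1; omega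
    rw [he, ← Nat.div_div_eq_div_mul, n1]
  have hjdiv : j / 2 ^ (t - 1) = c2 := Nat.div_eq_of_lt_le hjc.1 hjc.2
  -- v and its child are on the branch to leaf L
  have hveq : v = anc h L (v.1 : ℕ) hL (depth_le v) := by
    apply eq_anc
    rw [n2 _ (by omega)]
    have e1 : D - (v.1 : ℕ) = t := by omega
    have e2 : (2:ℕ) ^ t = 2 ^ (t - 1) * 2 := by rw [← pow_succ]; congr 1; omega
    rw [e1, e2, ← Nat.div_div_eq_div_mul, hjdiv]
    omega
  have hchild : child v b = anc h L ((v.1 : ℕ) + 1) hL (by omega) := by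
    have : ((child v b).1 : ℕ) = (v.1 : ℕ) + 1 := child_fst hvh b
    have h2 : ((child v b).2 : ℕ) = c2 := child_snd hvh b
    have := eq_anc (u := child v b) hL (by
      rw [h2, this, n2 _ (by omega)]
      have e1 : D - ((v.1 : ℕ) + 1) = t - 1 := by omega
      rw [e1, hjdiv])
    rw [this]
    exact anc_congr hL _ _ (by rw [child_fst hvh b])
  -- the subtree at depth D on the branch avoids S
  have hfree : ∀ e (he1 : D ≤ e) (he : e ≤ h), anc h L e hL he ∉ S := by
    intro e he1 he hin
    apply hjim
    rw [Finset.mem_image]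
    refine ⟨anc h L e hL he, hin, ?_⟩
    rw [hf]
    simp only [anc_fst, anc_snd]
    rw [Nat.div_div_eq_div_mul, ← pow_add]
    have : h - e + (e - D) = h - D := by omega
    rw [this, n1]
  -- the lowest vertex of S on the branch
  set T := (Finset.Icc (v.1 : ℕ) h).filter
    (fun d => if hd : d ≤ h then anc h L d hL hd ∈ S else False) with hT
  have hvT : (v.1 : ℕ) ∈ T := by
    rw [hT, Finset.mem_filter, Finset.mem_Icc]
    refine ⟨⟨le_rfl, by omega⟩, ?_⟩
    rw [dif_pos (depth_le v)]
    exact hveq ▸ hvS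
  set ds := T.max' ⟨_, hvT⟩ with hds
  have hdsT : ds ∈ T := T.max'_mem _
  rw [hT, Finset.mem_filter, Finset.mem_Icc] at hdsT
  have hdsh : ds ≤ h := hdsT.1.2
  have hdsv : (v.1 : ℕ) ≤ ds := hdsT.1.1
  have hdsS : anc h L ds hL hdsh ∈ S := by
    have := hdsT.2
    rwa [dif_pos hdsh] at this
  have hdsD : ds < D := by
    by_contra hcon
    exact hfree ds (by omega) hdsh hdsS
  have hafter : ∀ e (he1 : ds < e) (he : e ≤ h), anc h L e hL he ∉ S := by
    intro e he1 he hin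
    have heT : e ∈ T := by
      rw [hT, Finset.mem_filter, Finset.mem_Icc]
      exact ⟨⟨by omega, he⟩, by rw [dif_pos he]; exact hin⟩
    have := T.le_max' e heT
    omega
  refine ⟨anc h L (ds + 1) hL (by omega), ?_, ?_, ?_, ?_⟩
  · rw [hchild]
    exact isAncestor_anc hL _ _ (by omega)
  · simp only [anc_fst]; omega
  · exact ⟨anc h L ds hL hdsh, isParent_anc hL (by omega), hdsS⟩
  · refine ⟨hafter (ds + 1) (by omega) (by omega), anc h L h hL le_rfl,
      hafter h (by omega) le_rfl, rfl, ?_⟩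
    exact chain_reach_induced L hL (S : Set (BT h)) (h - (ds + 1)) (ds + 1) (by omega)
      (fun e he1 he => hafter e (by omega) he)

end BTP
/-- If `R` is a `(k, ℓ, m)`-compact family `{R 1, …, R q}` in `T_h` and `S ⊇ ⋃ R`
satisfies `1 ≤ |S| < 2 ^ (m - ℓ - 2)`, then there is a
`(2 k, ℓ + log₂ |S| + 2, m)`-compact family `{R' 1, …, R' q}` that is compatible
with `S`. -/
theorem stmt12 (h q k : ℕ) (ℓ m : ℝ) (R : Fin q → Finset (BT h))
    (hR : CompactFam k ℓ m R) (S : Finset (BT h))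
    (hsub : ∀ i : Fin q, R i ⊆ S)
    (hS1 : 1 ≤ S.card) (hS2 : (S.card : ℝ) < (2 : ℝ) ^ (m - ℓ - 2)) :
    ∃ R' : Fin q → Finset (BT h),
      CompactFam (2 * k) (ℓ + Real.logb 2 S.card + 2) m R' ∧
      ∀ i : Fin q, ∀ v ∈ R' i, CompatibleVert S v := by
  classical
  obtain ⟨a, hA1, hA2, hA3, hA4⟩ := hR
  set t := Nat.log 2 S.card + 2 with ht_def
  have ht : 2 ≤ t := by omega
  have hcard : S.card < 2 ^ (t - 1) := by
    have := Nat.lt_pow_succ_log_self (b := 2) (by norm_num) S.card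
    have he : t - 1 = Nat.log 2 S.card + 1 := by omega
    rw [he]
    exact this
  have htR : (t : ℝ) ≤ Real.logb 2 S.card + 2 := by
    have h1 := Real.natLog_le_logb S.card 2
    rw [ht_def]
    push_cast
    norm_num at h1 ⊢
    linarith
  have hlogb_lt : Real.logb 2 (S.card : ℝ) < m - ℓ - 2 := by
    have h0 : (0 : ℝ) < (S.card : ℝ) := by exact_mod_cast hS1
    calc Real.logb 2 (S.card : ℝ) < Real.logb 2 ((2 : ℝ) ^ (m - ℓ - 2)) :=
          Real.logb_lt_logb (by norm_num) h0 hS2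
    _ = m - ℓ - 2 := Real.logb_rpow (by norm_num) (by norm_num)
  have htm : (t : ℝ) < m - ℓ := by linarith
  -- depth bound for every vertex of every R i
  have hdep : ∀ i : Fin q, ∀ v ∈ R i, (v.1 : ℕ) + t ≤ h := by
    intro i v hv
    have hanc := (hA2 i v hv).1
    have hdist := (hA2 i v hv).2
    have hlow := BTP.depth_sub_le_dist hanc
    have h4 := hA4 i
    have hle : ((a i).1 : ℕ) ≤ (v.1 : ℕ) := hanc.1
    have hreal : ((v.1 : ℕ) : ℝ) - (((a i).1 : ℕ) : ℝ) ≤ ℓ := by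
      have : (((v.1 : ℕ) - ((a i).1 : ℕ) : ℕ) : ℝ) ≤ ((btTree h).dist v (a i) : ℝ) := by
        exact_mod_cast hlow
      rw [Nat.cast_sub hle] at this
      linarith
    have : ((v.1 : ℕ) : ℝ) + (t : ℝ) < (h : ℝ) := by linarith
    have : ((v.1 : ℕ) + t : ℕ) < h := by exact_mod_cast this
    omega
  have hmain : ∀ i : Fin q, ∀ v : BT h, v ∈ R i → ∀ b : Fin 2,
      ∃ w : BT h, IsAncestor (BTP.child v b) w ∧ (w.1 : ℕ) ≤ (v.1 : ℕ) + t ∧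
        CompatibleVert S w :=
    fun i v hv b => BTP.main_exists S ht hcard v (hsub i hv) (hdep i v hv) b
  choose W hW1 hW2 hW3 using hmain
  refine ⟨fun i => ((R i).attach ×ˢ (Finset.univ : Finset (Fin 2))).image
    (fun p => W i p.1.1 p.1.2 p.2), ?_, ?_⟩
  · -- main claim: distinct choices give unrelated vertices
    have hclaim : ∀ i : Fin q, ∀ (v v' : BT h) (hv : v ∈ R i) (hv' : v' ∈ R i)
        (b b' : Fin 2), ¬(v = v' ∧ b = b') →
        ¬ IsAncestor (W i v hv b) (W i v' hv' b') := by
      intro i v v' hv hv' b b' hne hanc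
      have hc := hW1 i v hv b
      have hc' := hW1 i v' hv' b'
      have hvh : (v.1 : ℕ) < h := by have := hdep i v hv; omega
      have hv'h : (v'.1 : ℕ) < h := by have := hdep i v' hv'; omega
      have hcw' : IsAncestor (BTP.child v b) (W i v' hv' b') := BTP.isAncestor_trans hc hanc
      have hcf := BTP.child_fst hvh b
      have hcf' := BTP.child_fst hv'h b'
      rcases le_or_gt (((BTP.child v b).1 : ℕ)) (((BTP.child v' b').1 : ℕ)) with hle | hlt
      · have hcc : IsAncestor (BTP.child v b) (BTP.child v' b') :=
          BTP.isAncestor_comparable hcw' hc' hle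
        have h1 : IsAncestor v (BTP.child v' b') :=
          BTP.isAncestor_trans (BTP.isAncestor_child hvh b) hcc
        have h2 : IsAncestor v' (BTP.child v' b') := BTP.isAncestor_child hv'h b'
        have hvv' : IsAncestor v v' := BTP.isAncestor_comparable h1 h2 (by omega)
        by_cases hveq : v = v'
        · subst hveq
          have hdeq : ((BTP.child v b).1 : ℕ) = ((BTP.child v b').1 : ℕ) := by omega
          have := BTP.eq_of_isAncestor_depth hcc hdeq
          have hsnd : ((BTP.child v b).2 : ℕ) = ((BTP.child v b').2 : ℕ) := by rw [this]
          rw [BTP.child_snd hvh b, BTP.child_snd hvh b'] at hsnd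
          have : b = b' := Fin.ext (by omega)
          exact hne ⟨rfl, this⟩
        · exact (hA1 i).1 v (Finset.mem_coe.2 hv) v' (Finset.mem_coe.2 hv') hveq hvv'
      · have hcc : IsAncestor (BTP.child v' b') (BTP.child v b) :=
          BTP.isAncestor_comparable hc' hcw' (by omega)
        have h1 : IsAncestor v' (BTP.child v b) :=
          BTP.isAncestor_trans (BTP.isAncestor_child hv'h b') hcc
        have h2 : IsAncestor v (BTP.child v b) := BTP.isAncestor_child hvh b
        have hv'v : IsAncestor v' v := BTP.isAncestor_comparable h1 h2 (by omega)
        have hveq : v' ≠ v := by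
          intro he
          rw [he] at hlt hcf'
          omega
        exact (hA1 i).1 v' (Finset.mem_coe.2 hv') v (Finset.mem_coe.2 hv) hveq hv'v
    have hmem : ∀ (i : Fin q) (w : BT h),
        w ∈ ((R i).attach ×ˢ (Finset.univ : Finset (Fin 2))).image
          (fun p => W i p.1.1 p.1.2 p.2) ↔
        ∃ (v : BT h) (hv : v ∈ R i) (b : Fin 2), w = W i v hv b := by
      intro i w
      constructor
      · intro hw
        rw [Finset.mem_image] at hw
        obtain ⟨p, _, hp2⟩ := hw
        exact ⟨p.1.1, p.1.2, p.2, hp2.symm⟩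
      · rintro ⟨v, hv, b, rfl⟩
        rw [Finset.mem_image]
        exact ⟨⟨⟨v, hv⟩, b⟩, by simp, rfl⟩
    refine ⟨a, ?_, ?_, hA3, hA4⟩
    · intro i
      constructor
      · -- unrelated
        intro w hw w' hw' hne hanc
        rw [Finset.mem_coe, hmem] at hw hw'
        obtain ⟨v, hv, b, rfl⟩ := hw
        obtain ⟨v', hv', b', rfl⟩ := hw'
        refine hclaim i v v' hv hv' b b' ?_ hanc
        rintro ⟨rfl, rfl⟩
        exact hne rfl
      · -- cardinality
        have hinj : Set.InjOn (fun p : {x // x ∈ R i} × Fin 2 => W i p.1.1 p.1.2 p.2)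
            (((R i).attach ×ˢ (Finset.univ : Finset (Fin 2))) : Finset _) := by
          intro p _ p' _ hpe
          by_contra hpe'
          have hpe2 : W i p.1.1 p.1.2 p.2 = W i p'.1.1 p'.1.2 p'.2 := hpe
          refine hclaim i p.1.1 p'.1.1 p.1.2 p'.1.2 p.2 p'.2 ?_
            (by rw [hpe2]; exact BTP.isAncestor_refl _)
          rintro ⟨he1, he2⟩
          exact hpe' (Prod.ext (Subtype.ext he1) he2)
        rw [Finset.card_image_of_injOn hinj, Finset.card_product, Finset.card_attach]
        have := (hA1 i).2
        simp only [Finset.card_univ, Fintype.card_fin]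
        omega
    · intro i w hw
      rw [hmem] at hw
      obtain ⟨v, hv, b, rfl⟩ := hw
      have hvh : (v.1 : ℕ) < h := by have := hdep i v hv; omega
      have hancw : IsAncestor (a i) (W i v hv b) :=
        BTP.isAncestor_trans (BTP.isAncestor_trans (hA2 i v hv).1 (BTP.isAncestor_child hvh b))
          (hW1 i v hv b)
      refine ⟨hancw, ?_⟩
      have hd1 := BTP.dist_le_of_ancestor hancw
      have hd2 := BTP.depth_sub_le_dist (hA2 i v hv).1
      have hd3 := hW2 i v hv b
      have hle1 : ((a i).1 : ℕ) ≤ (v.1 : ℕ) := (hA2 i v hv).1.1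
      have hdn : (btTree h).dist (W i v hv b) (a i) ≤ (btTree h).dist v (a i) + t := by omega
      have hdist := (hA2 i v hv).2
      have : ((btTree h).dist (W i v hv b) (a i) : ℝ) ≤ ((btTree h).dist v (a i) : ℝ) + (t : ℝ) := by
        exact_mod_cast hdn
      linarith
  · intro i w hw
    rw [Finset.mem_image] at hw
    obtain ⟨p, _, hp2⟩ := hw
    exact hp2 ▸ hW3 i p.1.1 p.1.2 p.2
end

section
/- For every graph G and every tree-partition {B_x : x ∈ V(T)} of G, there exists a node x ∈ V(T) such that no connected component of G − B_x has more than |V(G)|/2 vertices. -/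
open SimpleGraph Relation

/-- One step of adjacency inside a vertex subset `S`. -/
def StepIn {α : Type*} (G : SimpleGraph α) (S : Set α) (u v : α) : Prop :=
  u ∈ S ∧ v ∈ S ∧ G.Adj u v

lemma reachable_stepIn {α : Type*} {G : SimpleGraph α} {S : Set α} {u w : ↥S}
    (h : (G.induce S).Reachable u w) : ReflTransGen (StepIn G S) u.1 w.1 := by
  obtain ⟨p⟩ := h
  induction p with
  | nil => exact .refl
  | cons h p ih => exact .head ⟨Subtype.mem _, Subtype.mem _, h⟩ ih

lemma stepIn_reachable {α : Type*} {G : SimpleGraph α} {S : Set α} {u w : α} (hu : u ∈ S)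
    (h : ReflTransGen (StepIn G S) u w) :
    ∀ hw : w ∈ S, (G.induce S).Reachable ⟨u, hu⟩ ⟨w, hw⟩ := by
  induction h with
  | refl => intro hw; exact Reachable.refl _
  | tail hr hstep ih =>
    intro hw
    exact (ih hstep.1).trans (SimpleGraph.Adj.reachable (by exact hstep.2.2))

lemma lift_walk {α ι : Type*} {G : SimpleGraph α} {T : SimpleGraph ι} {B : ι → Set α}
    (hB : IsHPartition G T B) (b : α → ι) (hb : ∀ v, v ∈ B (b v))
    {S : Set α} {u w : α} (h : ReflTransGen (StepIn G S) u w) :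
    ∃ q : T.Walk (b u) (b w),
      ∀ s ∈ q.support, ∃ z, ReflTransGen (StepIn G S) u z ∧ b z = s := by
  induction h using ReflTransGen.head_induction_on with
  | refl =>
    refine ⟨.nil, fun s hs => ⟨w, .refl, ?_⟩⟩
    simp only [Walk.support_nil, List.mem_singleton] at hs
    exact hs.symm
  | head hstep hr ih =>
    obtain ⟨q, hq⟩ := ih
    rcases hB.2 hstep.2.2 (hb _) (hb _) with he | ha
    · refine ⟨q.copy he.symm rfl, ?_⟩
      intro s hs
      rw [Walk.support_copy] at hs
      obtain ⟨z, hz1, hz2⟩ := hq s hs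
      exact ⟨z, .head hstep hz1, hz2⟩
    · refine ⟨.cons ha q, ?_⟩
      intro s hs
      rw [Walk.support_cons] at hs
      rcases List.mem_cons.mp hs with rfl | hs
      · exact ⟨_, .refl, rfl⟩
      · obtain ⟨z, hz1, hz2⟩ := hq s hs
        exact ⟨z, .head hstep hz1, hz2⟩

lemma path_support_subset {ι : Type*} [DecidableEq ι] {T : SimpleGraph ι}
    (hT : T.IsAcyclic) {u v : ι}
    {p : T.Walk u v} (hp : p.IsPath) (q : T.Walk u v) : p.support ⊆ q.support := by
  have h := hT.path_unique ⟨p, hp⟩ ⟨q.bypass, q.bypass_isPath⟩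
  have h' : p = q.bypass := congrArg Subtype.val h
  rw [h']
  exact q.support_bypass_subset

lemma second_vertex {ι : Type*} [DecidableEq ι] {T : SimpleGraph ι} (hT : T.IsAcyclic)
    {z s y : ι}
    {p : T.Walk z s} (hp : p.IsPath) (hzy : T.Adj z y) (hy : y ∈ p.support) :
    ∃ q : T.Walk y s, p = Walk.cons hzy q := by
  have h1 : p.takeUntil y hy = Walk.cons hzy .nil := by
    have := hT.path_unique ⟨p.takeUntil y hy, hp.takeUntil hy⟩
      ⟨Walk.cons hzy .nil, by simp [hzy.ne]⟩
    exact congrArg Subtype.val this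
  refine ⟨p.dropUntil y hy, ?_⟩
  conv_lhs => rw [← p.take_spec hy]
  rw [h1]
  rfl

lemma cons_heads_eq {ι : Type*} {T : SimpleGraph ι} {z s y1 y2 : ι} {p : T.Walk z s}
    {h1 : T.Adj z y1} {h2 : T.Adj z y2} {q1 : T.Walk y1 s} {q2 : T.Walk y2 s}
    (e1 : p = Walk.cons h1 q1) (e2 : p = Walk.cons h2 q2) : y1 = y2 := by
  have := congrArg (fun w => w.getVert 1) (e1.symm.trans e2)
  simpa using this

lemma mem_support_of {ι : Type*} [DecidableEq ι] {T : SimpleGraph ι} (hT : T.IsAcyclic)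
    {z s t : ι} {p : T.Walk z s} {r : T.Walk z t} {q : T.Walk s t}
    (hp : p.IsPath) (hr : r.IsPath) (hq : q.IsPath) (hzq : z ∉ q.support)
    {y : ι} (hzy : T.Adj z y) (hy : y ∈ p.support) : y ∈ r.support := by
  by_cases hyr : y ∈ r.support
  · exact hyr
  exfalso
  have hinter : ∀ u ∈ p.support, u ∈ r.support → u = z := by
    intro u hup hur
    by_contra hne
    have hzu : z ≠ u := fun e => hne e.symm
    have e : p.takeUntil u hup = r.takeUntil u hur :=
      congrArg Subtype.val
        (hT.path_unique ⟨p.takeUntil u hup, hp.takeUntil hup⟩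
          ⟨r.takeUntil u hur, hr.takeUntil hur⟩)
    obtain ⟨y1, h1, pu', hpu'⟩ := Walk.exists_eq_cons_of_ne hzu (p.takeUntil u hup)
    have hy1p : y1 ∈ p.support := by
      apply p.support_takeUntil_subset hup
      rw [hpu']
      simp
    have hy1r : y1 ∈ r.support := by
      apply r.support_takeUntil_subset hur
      rw [← e, hpu']
      simp
    obtain ⟨qy1, hqy1⟩ := second_vertex hT hp h1 hy1p
    obtain ⟨qy, hqy⟩ := second_vertex hT hp hzy hy
    have : y = y1 := cons_heads_eq hqy hqy1
    exact hyr (this ▸ hy1r)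
  have hppnodup : (p.reverse.append r).support.Nodup := by
    rw [Walk.support_append, Walk.support_reverse]
    have hn1 : p.support.reverse.Nodup := List.nodup_reverse.mpr hp.support_nodup
    have hn2 : r.support.tail.Nodup := by
      have := hr.support_nodup
      rw [r.support_eq_cons] at this
      exact (List.nodup_cons.mp this).2
    refine hn1.append hn2 ?_
    intro u hu1 hu2
    have hu1' : u ∈ p.support := List.mem_reverse.mp hu1
    have hu2' : u ∈ r.support := by
      rw [r.support_eq_cons]
      exact List.mem_cons_of_mem _ hu2
    have := hinter u hu1' hu2'
    subst this
    have := hr.support_nodup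
    rw [r.support_eq_cons] at this
    exact (List.nodup_cons.mp this).1 hu2
  have hpp : (p.reverse.append r).IsPath := (Walk.isPath_def _).mpr hppnodup
  have : z ∈ q.support := by
    apply path_support_subset hT hpp q
    rw [Walk.mem_support_append_iff]
    left
    rw [Walk.support_reverse, List.mem_reverse]
    exact p.start_mem_support
  exact hzq this

/-- For every graph `G` and every tree-partition `{B x : x ∈ V(T)}` of `G` there is a
node `x` such that no component of `G − B x` has more than `|V(G)| / 2` vertices. -/
theorem stmt14 {α ι : Type} [Fintype α] (G : SimpleGraph α)
    (T : SimpleGraph ι) (hT : T.IsTree) (B : ι → Set α)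
    (hB : IsHPartition G T B) :
    ∃ x : ι, ∀ C : (G.induce {v : α | v ∉ B x}).ConnectedComponent,
      C.supp.ncard * 2 ≤ Fintype.card α := by
  classical
  by_contra hcon
  push_neg at hcon
  choose C0 hC0 using hcon
  choose b hb hbu using hB.1
  set n := Fintype.card α with hn
  set F : ι → Set α := fun x => Subtype.val '' (C0 x).supp with hF
  have hFcard : ∀ x, (F x).ncard = (C0 x).supp.ncard := fun x =>
    Set.ncard_image_of_injective _ Subtype.val_injective
  have big : ∀ x, n < (F x).ncard * 2 := fun x => by rw [hFcard]; exact hC0 x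
  have memF : ∀ x v, v ∈ F x ↔ ∃ hv : v ∉ B x,
      (G.induce {v : α | v ∉ B x}).connectedComponentMk ⟨v, hv⟩ = C0 x := by
    intro x v
    constructor
    · rintro ⟨⟨v', hv'⟩, hsupp, rfl⟩
      exact ⟨hv', (ConnectedComponent.mem_supp_iff _ _).mp hsupp⟩
    · rintro ⟨hv, hc⟩
      exact ⟨⟨v, hv⟩, (ConnectedComponent.mem_supp_iff _ _).mpr hc, rfl⟩
  have hFnot : ∀ x v, v ∈ F x → v ∉ B x := fun x v hv => ((memF x v).mp hv).choose
  have closure : ∀ x v w, v ∈ F x →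
      ReflTransGen (StepIn G {u : α | u ∉ B x}) v w → w ∈ F x := by
    intro x v w hv h
    induction h with
    | refl => exact hv
    | @tail c d hr hstep ih =>
      obtain ⟨hc, hceq⟩ := (memF x c).mp ih
      have hd : d ∉ B x := hstep.2.1
      have hreach : (G.induce {u : α | u ∉ B x}).Reachable ⟨c, hc⟩ ⟨d, hd⟩ :=
        SimpleGraph.Adj.reachable (by exact hstep.2.2)
      refine (memF x d).mpr ⟨hd, ?_⟩
      rw [← hceq]
      exact (ConnectedComponent.sound hreach).symm
  have relF : ∀ x v w, v ∈ F x → w ∈ F x →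
      ReflTransGen (StepIn G {u : α | u ∉ B x}) v w := by
    intro x v w hv hw
    obtain ⟨hv', hveq⟩ := (memF x v).mp hv
    obtain ⟨hw', hweq⟩ := (memF x w).mp hw
    have hreach : (G.induce {u : α | u ∉ B x}).Reachable ⟨v, hv'⟩ ⟨w, hw'⟩ :=
      ConnectedComponent.exact (hveq.trans hweq.symm)
    exact reachable_stepIn hreach
  have hmeet : ∀ P Q : Set α, n < P.ncard * 2 → n < Q.ncard * 2 → (P ∩ Q).Nonempty := by
    intro P Q hP hQ
    rw [Set.nonempty_iff_ne_empty]
    intro hed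
    have hdis : Disjoint P Q := Set.disjoint_iff_inter_eq_empty.mpr hed
    have h1 : (P ∪ Q).ncard = P.ncard + Q.ncard :=
      Set.ncard_union_eq hdis (Set.toFinite _) (Set.toFinite _)
    have h2 : (P ∪ Q).ncard ≤ n := by
      have := Set.ncard_le_ncard (Set.subset_univ (P ∪ Q)) (Set.toFinite _)
      rwa [Set.ncard_univ, Nat.card_eq_fintype_card] at this
    omega
  have hrange : (Set.range fun x => (F x).ncard).Nonempty := by
    obtain ⟨x⟩ := hT.isConnected.nonempty
    exact ⟨_, ⟨x, rfl⟩⟩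
  obtain ⟨x0, hx0⟩ := Nat.sInf_mem hrange
  set m := sInf (Set.range fun x => (F x).ncard) with hm
  have hmin : ∀ y, m ≤ (F y).ncard := fun y => Nat.sInf_le ⟨y, rfl⟩
  set K := F x0 with hK
  have bigK : n < K.ncard * 2 := big x0
  have hKcard : K.ncard = m := hx0
  set S : Set ι := {s | ∃ v ∈ K, b v = s} with hS
  have hKne : K.Nonempty := by
    rw [Set.nonempty_iff_ne_empty]
    intro he
    rw [he, Set.ncard_empty] at bigK
    omega
  obtain ⟨v0, hv0⟩ := hKne
  have hs0S : b v0 ∈ S := ⟨v0, hv0, rfl⟩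
  set s0 := b v0 with hs0
  let pth : ∀ z s : ι, T.Walk z s := fun z s => (hT.existsUnique_path z s).choose
  have pth_path : ∀ z s, (pth z s).IsPath := fun z s =>
    (hT.existsUnique_path z s).choose_spec.1
  have pth_uniq : ∀ z s (q : T.Walk z s), q.IsPath → q = pth z s := fun z s q hq =>
    (hT.existsUnique_path z s).choose_spec.2 q hq
  have hSconn : ∀ s t, s ∈ S → t ∈ S → ∀ u ∈ (pth s t).support, u ∈ S := by
    rintro s t ⟨v, hvK, rfl⟩ ⟨w, hwK, rfl⟩ u hu
    have hrel := relF x0 v w hvK hwK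
    obtain ⟨q, hq⟩ := lift_walk hB b hb hrel
    have hsub := path_support_subset hT.IsAcyclic (pth_path (b v) (b w)) q
    obtain ⟨z, hz1, hz2⟩ := hq u (hsub hu)
    exact ⟨z, closure x0 v z hvK hz1, hz2⟩
  have hnotS : ∀ z, F z = K → z ∉ S := by
    intro z hFz hzS
    obtain ⟨v, hvK, hbv⟩ := hzS
    have hvF : v ∈ F z := by rw [hFz]; exact hvK
    exact hFnot z v hvF (hbv ▸ hb v)
  have key : ∀ N z, (pth z s0).length ≤ N → F z = K → False := by
    intro N
    induction N with
    | zero =>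
      intro z hlen hFz
      have hz : z = s0 := Walk.eq_of_length_eq_zero (Nat.le_zero.mp hlen)
      exact hnotS z hFz (hz ▸ hs0S)
    | succ N ih =>
      intro z hlen hFz
      have hzS : z ∉ S := hnotS z hFz
      by_cases hzs0 : z = s0
      · exact hzS (hzs0 ▸ hs0S)
      obtain ⟨y, hzy, p2, hp2⟩ := Walk.exists_eq_cons_of_ne hzs0 (pth z s0)
      have hp2path : p2.IsPath := by
        have := pth_path z s0
        rw [hp2] at this
        exact this.of_cons
      have hpthy : p2 = pth y s0 := pth_uniq y s0 p2 hp2path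
      have hymem : ∀ t, t ∈ S → y ∈ (pth z t).support := by
        intro t htS
        refine mem_support_of hT.IsAcyclic (pth_path z s0) (pth_path z t) (pth_path s0 t)
          (fun hzq => hzS (hSconn s0 t hs0S htS z hzq)) hzy ?_
        rw [hp2]
        simp
      have h1 : ∀ v, v ∈ F y → v ∉ B z := by
        intro v hv hvB
        obtain ⟨u, huy, huK⟩ := hmeet (F y) K (big y) bigK
        have htS : b u ∈ S := ⟨u, huK, rfl⟩
        have hrel := relF y v u hv huy
        obtain ⟨q, hq⟩ := lift_walk hB b hb hrel
        have hbv : b v = z := (hbu v z hvB).symm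
        have hyq : y ∈ q.support := by
          have hsub := path_support_subset hT.IsAcyclic (pth_path z (b u)) (q.copy hbv rfl)
          have := hsub (hymem (b u) htS)
          rwa [Walk.support_copy] at this
        obtain ⟨w', hw'rel, hw'b⟩ := hq y hyq
        have hw'F : w' ∈ F y := closure y v w' hv hw'rel
        exact hFnot y w' hw'F (hw'b ▸ hb w')
      obtain ⟨u, huy, huK⟩ := hmeet (F y) K (big y) bigK
      have hsubK : F y ⊆ K := by
        intro w hw
        have hrel := relF y u w huy hw
        have conv : ∀ w', ReflTransGen (StepIn G {v : α | v ∉ B y}) u w' →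
            w' ∈ F y ∧ ReflTransGen (StepIn G {v : α | v ∉ B z}) u w' := by
          intro w' h
          induction h with
          | refl => exact ⟨huy, .refl⟩
          | @tail c d hr hstep ih2 =>
            have hcF := ih2.1
            have hdF : d ∈ F y := closure y c d hcF (.single hstep)
            exact ⟨hdF, ih2.2.tail ⟨h1 c hcF, h1 d hdF, hstep.2.2⟩⟩
        have hrel2 := (conv w hrel).2
        have huFz : u ∈ F z := by rw [hFz]; exact huK
        have := closure z u w huFz hrel2
        rwa [hFz] at this
      have hFyK : F y = K :=
        Set.eq_of_subset_of_ncard_le hsubK (by rw [hKcard]; exact hmin y) (Set.toFinite _)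
      have hlen2 : (pth y s0).length ≤ N := by
        have hl := congrArg Walk.length hp2
        rw [Walk.length_cons] at hl
        rw [← hpthy]
        omega
      exact ih y hlen2 hFyK
  exact key (pth x0 s0).length x0 le_rfl hK.symm
end
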